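/- arXiv:2110.10377 — 5 statements merged into one kernel-verified Lean document; each statement's English description precedes it below -/
import Mathlib

section
/- For every weight λ ∈ ℤ^{r+1}, the set of Lusztig data Lu(λ+ρ) = {m ∈ ℕ^{Φ⁺} : s_{i,j}(m,λ) ≥ −1 for all (i,j) ∈ Φ⁺} is finite. -/
/-- `(i,j)` is a positive root of `GL_{r+1}`, i.e. `1 ≤ i < j ≤ r+1`. -/
def PosRoot (r : ℕ) (p : ℕ × ℕ) : Prop := 1 ≤ p.1 ∧ p.1 < p.2 ∧ p.2 ≤ r + 1

/-- The statistic `s_{i,j}(m, λ) = Λ_i + Σ_{k=j}^{r} m_{i+1,k+1} − Σ_{k=j}^{r+1} m_{i,k}`,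
where `Λ_i = λ_i − λ_{i+1}`. -/
def sStat (r : ℕ) (lam : ℕ → ℤ) (m : ℕ × ℕ → ℕ) (i j : ℕ) : ℤ :=
  (lam i - lam (i + 1)) + ∑ k ∈ Finset.Icc j r, (m (i + 1, k + 1) : ℤ)
    - ∑ k ∈ Finset.Icc j (r + 1), (m (i, k) : ℤ)

/-- Row sum `Σ_{k=i+1}^{r+1} m_{i,k}`. -/
def rowS (r : ℕ) (m : ℕ × ℕ → ℕ) (i : ℕ) : ℤ :=
  ∑ k ∈ Finset.Icc (i + 1) (r + 1), (m (i, k) : ℤ)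

lemma rowS_nonneg (r : ℕ) (m : ℕ × ℕ → ℕ) (i : ℕ) : 0 ≤ rowS r m i :=
  Finset.sum_nonneg fun k _ => by positivity

lemma rowS_step (r : ℕ) (lam : ℕ → ℤ) (m : ℕ × ℕ → ℕ) (i : ℕ)
    (hs : -1 ≤ sStat r lam m i (i + 1)) :
    rowS r m i ≤ (lam i - lam (i + 1)) + 1 + rowS r m (i + 1) := by
  have hre : ∑ k ∈ Finset.Icc (i + 1) r, (m (i + 1, k + 1) : ℤ)
      = ∑ k ∈ Finset.Icc (i + 2) (r + 1), (m (i + 1, k) : ℤ) := by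
    refine Finset.sum_nbij' (fun k => k + 1) (fun k => k - 1) ?_ ?_ ?_ ?_ ?_ <;>
      simp only [Finset.mem_Icc] <;> intros <;> first | omega | trivial
  unfold sStat at hs
  unfold rowS
  rw [hre] at hs
  linarith

/-- Downward induction bound on row sums. -/
lemma rowS_bound (r : ℕ) (lam : ℕ → ℤ) (m : ℕ × ℕ → ℕ)
    (hm : ∀ p, ¬ PosRoot r p → m p = 0)
    (hs : ∀ i j, PosRoot r (i, j) → -1 ≤ sStat r lam m i j) :
    ∀ d i, r + 1 ≤ i + d → 1 ≤ i →
      rowS r m i ≤ ∑ t ∈ Finset.Icc i r, ((lam t - lam (t + 1)) + 1) := by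
  intro d
  induction d with
  | zero =>
    intro i hle h1
    have h1' : r + 1 ≤ i := by omega
    have : Finset.Icc (i + 1) (r + 1) = ∅ ∨ Finset.Icc (i+1) (r+1) = {r+1} := by
      rcases Nat.lt_or_ge r i with h | h
      · left; apply Finset.Icc_eq_empty; omega
      · right
        have : i = r + 1 := by omega
        subst this; omega
    have hz : rowS r m i = 0 := by
      unfold rowS
      rcases this with h | h
      · rw [h]; simp
      · rw [h]
        simp only [Finset.sum_singleton]
        rw [hm (i, r + 1) (by simp [PosRoot]; omega)]
        simp
    rw [hz, Finset.Icc_eq_empty (by omega)]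
    simp
  | succ d ih =>
    intro i hle h1
    rcases Nat.lt_or_ge r i with h | h
    · exact ih i (by omega) h1
    · -- 1 ≤ i ≤ r
      have hstep := rowS_step r lam m i (hs i (i + 1) ⟨h1, by omega, by omega⟩)
      have hih : rowS r m (i + 1) ≤ ∑ t ∈ Finset.Icc (i + 1) r,
          ((lam t - lam (t + 1)) + 1) := by
        rcases Nat.lt_or_ge r (i + 1) with h' | h'
        · -- i = r : rowS (r+1) row handled by ih anyway? need 1 ≤ i+1 ok
          exact ih (i + 1) (by omega) (by omega)
        · exact ih (i + 1) (by omega) (by omega)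
      have hsplit : ∑ t ∈ Finset.Icc i r, ((lam t - lam (t + 1)) + 1)
          = ((lam i - lam (i + 1)) + 1) + ∑ t ∈ Finset.Icc (i + 1) r,
            ((lam t - lam (t + 1)) + 1) := by
        rw [← Finset.Ioc_insert_left h, Finset.sum_insert (by simp),
          Finset.Icc_add_one_left_eq_Ioc]
      rw [hsplit]
      linarith

/-- For every weight `λ ∈ ℤ^{r+1}`, the set of Lusztig data
`Lu(λ+ρ) = {m ∈ ℕ^{Φ⁺} : s_{i,j}(m,λ) ≥ −1 for all (i,j) ∈ Φ⁺}` is finite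
(elements of `ℕ^{Φ⁺}` are realized as functions `ℕ × ℕ → ℕ` vanishing off `Φ⁺`). -/
theorem lusztig_data_finite (r : ℕ) (hr : 1 ≤ r) (lam : ℕ → ℤ) :
    Set.Finite {m : ℕ × ℕ → ℕ |
      (∀ p, ¬ PosRoot r p → m p = 0) ∧
      ∀ i j, PosRoot r (i, j) → -1 ≤ sStat r lam m i j} := by
  set B : ℤ := ∑ t ∈ Finset.Icc 1 r, (|lam t - lam (t + 1)| + 1) with hBdef
  set Bn : ℕ := B.toNat with hBn
  set S : Finset (ℕ × ℕ) := Finset.range (r + 2) ×ˢ Finset.range (r + 2) with hS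
  have hPS : ∀ p, PosRoot r p → p ∈ S := by
    intro p hp
    obtain ⟨h1, h2, h3⟩ := hp
    simp [hS, Finset.mem_product, Finset.mem_range]
    omega
  -- every element of the set is bounded by Bn pointwise
  have hbound : ∀ m ∈ {m : ℕ × ℕ → ℕ |
      (∀ p, ¬ PosRoot r p → m p = 0) ∧
      ∀ i j, PosRoot r (i, j) → -1 ≤ sStat r lam m i j}, ∀ p, m p ≤ Bn := by
    rintro m ⟨hm, hs⟩ p
    by_cases hp : PosRoot r p
    · obtain ⟨i, j⟩ := p
      obtain ⟨h1, h2, h3⟩ := hp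
      have hrow := rowS_bound r lam m hm hs (r + 1) i (by omega) h1
      have hterm : (m (i, j) : ℤ) ≤ rowS r m i := by
        apply Finset.single_le_sum (f := fun k => (m (i, k) : ℤ))
          (fun k _ => by positivity)
        simp [Finset.mem_Icc]; omega
      have hle : ∑ t ∈ Finset.Icc i r, ((lam t - lam (t + 1)) + 1) ≤ B := by
        rw [hBdef]
        calc ∑ t ∈ Finset.Icc i r, ((lam t - lam (t + 1)) + 1)
            ≤ ∑ t ∈ Finset.Icc i r, (|lam t - lam (t + 1)| + 1) :=
              Finset.sum_le_sum fun t _ => by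
                have := le_abs_self (lam t - lam (t + 1)); linarith
          _ ≤ ∑ t ∈ Finset.Icc 1 r, (|lam t - lam (t + 1)| + 1) :=
              Finset.sum_le_sum_of_subset_of_nonneg
                (fun t ht => by simp only [Finset.mem_Icc] at ht ⊢; omega)
                (fun t _ _ => by positivity)
      have : (m (i, j) : ℤ) ≤ B := le_trans hterm (le_trans hrow hle)
      have hB' : B ≤ (Bn : ℤ) := Int.self_le_toNat B
      omega
    · rw [hm p hp]; exact Nat.zero_le _
  -- inject into functions on the finite set S with values ≤ Bn
  apply Set.Finite.of_finite_image (f := fun m (p : {q // q ∈ S}) => m p.1)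
  · apply Set.Finite.subset (Set.Finite.pi (fun _ : {q // q ∈ S} =>
      Set.finite_Iic Bn))
    rintro f ⟨m, hmem, rfl⟩
    intro p _
    exact hbound m hmem p.1
  · rintro m ⟨hm, _⟩ m' ⟨hm', _⟩ heq
    funext p
    by_cases hp : PosRoot r p
    · exact congrFun heq ⟨p, hPS p hp⟩
    · rw [hm p hp, hm' p hp]
end

section
/- In the colored lattice model, a state is uniquely determined by its vertical edge labels: if two states on the same rectangular grid, both having all right-boundary horizontal labels equal to +, assign the same subset of colors to every vertical edge, then they assign the same label to every horizontal edge, and hence coincide. -/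
/-- A state of the colored lattice model on the rectangular grid with rows
`k = r+1` (top) down to `1` (bottom) and columns `c = M` (left) down to `0` (right).
`V t c` is the set of colors on the vertical edge between row `t+1` and row `t`
at column `c` (so the top edge of the vertex in row `k` is `V k c` and its bottom edge
is `V (k-1) c`; `V (r+1) c` are the top-boundary edges and `V 0 c` the bottom-boundary
ones).  `H k c` is the label of the horizontal edge to the right of the vertex in row
`k`, column `c` (so the left edge of that vertex is `H k (c+1)`; `H k 0` are the
right-boundary edges); `none` is the uncolored label `+`. -/
structure LatticeState (r M : ℕ) where
  V : ℕ → ℕ → Set ℕ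
  H : ℕ → ℕ → Option ℕ

/-- Admissibility of the vertex in row `k`, column `c`: exactly one of the five
allowed configurations holds (the five cases are mutually exclusive). -/
def AdmVertex {r M : ℕ} (S : LatticeState r M) (k c : ℕ) : Prop :=
  let T := S.V k c          -- top set Σ
  let B := S.V (k - 1) c    -- bottom set Σ′
  let L := S.H k (c + 1)    -- left label
  let R := S.H k c          -- right label
  (L = none ∧ R = none ∧ B = T) ∨
  (∃ c₀ : ℕ, L = some c₀ ∧ R = some c₀ ∧ B = T) ∨
  (∃ c₀ : ℕ, R = none ∧ L = some c₀ ∧ c₀ ∈ T ∧ B = T \ {c₀}) ∨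
  (∃ c₀ : ℕ, L = none ∧ R = some c₀ ∧ c₀ ∉ T ∧ B = insert c₀ T) ∨
  (∃ c₀ d₀ : ℕ, L = some c₀ ∧ R = some d₀ ∧ c₀ ∈ T ∧ d₀ ∉ T ∧ d₀ < c₀ ∧
    B = insert d₀ (T \ {c₀}))

lemma not_mem_insert_diff {a b : ℕ} {T : Set ℕ} (hba : b < a) :
    a ∉ insert b (T \ {a}) := by
  intro h
  rcases Set.mem_insert_iff.1 h with h | ⟨_, h⟩
  · omega
  · exact h rfl

/-- The left label of an admissible vertex is determined by the top set, bottom set,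
and right label. -/
lemma left_label_determined (T B : Set ℕ) (L₁ L₂ R : Option ℕ)
    (h1 : (L₁ = none ∧ R = none ∧ B = T) ∨
      (∃ c₀ : ℕ, L₁ = some c₀ ∧ R = some c₀ ∧ B = T) ∨
      (∃ c₀ : ℕ, R = none ∧ L₁ = some c₀ ∧ c₀ ∈ T ∧ B = T \ {c₀}) ∨
      (∃ c₀ : ℕ, L₁ = none ∧ R = some c₀ ∧ c₀ ∉ T ∧ B = insert c₀ T) ∨
      (∃ c₀ d₀ : ℕ, L₁ = some c₀ ∧ R = some d₀ ∧ c₀ ∈ T ∧ d₀ ∉ T ∧ d₀ < c₀ ∧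
        B = insert d₀ (T \ {c₀})))
    (h2 : (L₂ = none ∧ R = none ∧ B = T) ∨
      (∃ c₀ : ℕ, L₂ = some c₀ ∧ R = some c₀ ∧ B = T) ∨
      (∃ c₀ : ℕ, R = none ∧ L₂ = some c₀ ∧ c₀ ∈ T ∧ B = T \ {c₀}) ∨
      (∃ c₀ : ℕ, L₂ = none ∧ R = some c₀ ∧ c₀ ∉ T ∧ B = insert c₀ T) ∨
      (∃ c₀ d₀ : ℕ, L₂ = some c₀ ∧ R = some d₀ ∧ c₀ ∈ T ∧ d₀ ∉ T ∧ d₀ < c₀ ∧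
        B = insert d₀ (T \ {c₀}))) :
    L₁ = L₂ := by
  rcases h1 with ⟨e1, e2, e3⟩ | ⟨a, e1, e2, e3⟩ | ⟨a, e1, e2, e3, e4⟩ |
      ⟨a, e1, e2, e3, e4⟩ | ⟨a, b, e1, e2, e3, e4, e5, e6⟩ <;>
    rcases h2 with ⟨f1, f2, f3⟩ | ⟨a', f1, f2, f3⟩ | ⟨a', f1, f2, f3, f4⟩ |
      ⟨a', f1, f2, f3, f4⟩ | ⟨a', b', f1, f2, f3, f4, f5, f6⟩
  -- (1,1)
  · rw [e1, f1]
  -- (1,2)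
  · rw [e2] at f2; cases f2
  -- (1,3)
  · exfalso
    have h : a' ∈ T \ {a'} := by rw [← f4, e3]; exact f3
    exact h.2 rfl
  -- (1,4)
  · rw [e2] at f2; cases f2
  -- (1,5)
  · rw [e2] at f2; cases f2
  -- (2,1)
  · rw [e2] at f2; cases f2
  -- (2,2)
  · rw [e2] at f2; injection f2 with h; rw [e1, f1, h]
  -- (2,3)
  · rw [e2] at f1; cases f1
  -- (2,4)
  · exfalso
    rw [e2] at f2; injection f2 with h; rw [← h] at f3 f4
    have hh : a ∈ T := by rw [← e3, f4]; exact Set.mem_insert _ _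
    exact f3 hh
  -- (2,5)
  · exfalso
    have h : a' ∈ insert b' (T \ {a'}) := by rw [← f6, e3]; exact f3
    rcases Set.mem_insert_iff.1 h with h | ⟨_, h⟩
    · omega
    · exact h rfl
  -- (3,1)
  · exfalso
    have h : a ∈ T \ {a} := by rw [← e4, f3]; exact e3
    exact h.2 rfl
  -- (3,2)
  · rw [e1] at f2; cases f2
  -- (3,3)
  · by_cases h : a = a'
    · rw [e2, f2, h]
    · exfalso
      have ha : a ∈ T \ {a'} := ⟨e3, h⟩
      rw [← f4, e4] at ha
      exact ha.2 rfl
  -- (3,4)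
  · rw [e1] at f2; cases f2
  -- (3,5)
  · rw [e1] at f2; cases f2
  -- (4,1)
  · rw [e2] at f2; cases f2
  -- (4,2)
  · exfalso
    rw [e2] at f2; injection f2 with h; subst h
    have h : a ∈ T := by rw [← f3, e4]; exact Set.mem_insert _ _
    exact e3 h
  -- (4,3)
  · rw [e2] at f1; cases f1
  -- (4,4)
  · rw [e1, f1]
  -- (4,5)
  · exfalso
    have h : a' ∈ insert b' (T \ {a'}) := by
      rw [← f6, e4]; exact Set.mem_insert_of_mem _ f3
    exact not_mem_insert_diff f5 h
  -- (5,1)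
  · rw [e2] at f2; cases f2
  -- (5,2)
  · exfalso
    have h : a ∈ insert b (T \ {a}) := by rw [← e6, f3]; exact e3
    exact not_mem_insert_diff e5 h
  -- (5,3)
  · rw [e2] at f1; cases f1
  -- (5,4)
  · exfalso
    have h : a ∈ insert b (T \ {a}) := by
      rw [← e6, f4]; exact Set.mem_insert_of_mem _ e3
    exact not_mem_insert_diff e5 h
  -- (5,5)
  · by_cases h : a = a'
    · rw [e1, f1, h]
    · exfalso
      have ha : a ∈ insert b' (T \ {a'}) :=
        Set.mem_insert_of_mem _ ⟨e3, h⟩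
      rw [← f6, e6] at ha
      exact not_mem_insert_diff e5 ha

/-- A state of the colored lattice model is uniquely determined by its vertical edge
labels: if two admissible states on the same grid, both with all right-boundary
horizontal labels equal to `+`, assign the same subset of colors to every vertical
edge, then they assign the same label to every horizontal edge. -/
theorem state_determined_by_vertical_edges (r M : ℕ) (hr : 1 ≤ r)
    (S₁ S₂ : LatticeState r M)
    (h₁ : ∀ k c, 1 ≤ k → k ≤ r + 1 → c ≤ M → AdmVertex S₁ k c)
    (h₂ : ∀ k c, 1 ≤ k → k ≤ r + 1 → c ≤ M → AdmVertex S₂ k c)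
    (hb₁ : ∀ k, 1 ≤ k → k ≤ r + 1 → S₁.H k 0 = none)
    (hb₂ : ∀ k, 1 ≤ k → k ≤ r + 1 → S₂.H k 0 = none)
    (hV : ∀ t c, t ≤ r + 1 → c ≤ M → S₁.V t c = S₂.V t c) :
    ∀ k c, 1 ≤ k → k ≤ r + 1 → c ≤ M + 1 → S₁.H k c = S₂.H k c := by
  suffices H : ∀ c, c ≤ M + 1 → ∀ k, 1 ≤ k → k ≤ r + 1 → S₁.H k c = S₂.H k c by
    intro k c hk hkr hc; exact H c hc k hk hkr
  intro c
  induction c with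
  | zero => intro _ k hk hkr; rw [hb₁ k hk hkr, hb₂ k hk hkr]
  | succ c ih =>
    intro hc k hk hkr
    have hcM : c ≤ M := by omega
    have a1 := h₁ k c hk hkr hcM
    have a2 := h₂ k c hk hkr hcM
    simp only [AdmVertex] at a1 a2
    rw [← hV k c (by omega) hcM, ← hV (k - 1) c (by omega) hcM,
      ← ih (by omega) k hk hkr] at a2
    exact left_label_determined (S₁.V k c) (S₁.V (k - 1) c)
      (S₁.H k (c + 1)) (S₂.H k (c + 1)) (S₁.H k c) a1 a2
end

section
/- Let F be a field, let (i_1, …, i_N) be any reduced word for the longest element w₀ of S_{r+1}, and let γ_1, …, γ_N be the induced enumeration of the positive roots Φ⁺. For every k ∈ {1, …, N}, every z ∈ F, and every g ∈ G_k, there exists a unique g′ ∈ G_k such that e_{−γ_k}(z) · g = g′ · e_{−γ_k}(z) in GL_{r+1}(F). -/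
open Fin.NatCast

/-- The simple transposition `s_k` of `S_{r+1}` (0-indexed: it swaps `k` and `k+1`;
it corresponds to the 1-based simple transposition `s_{k+1}`). -/
def sT (r k : ℕ) : Equiv.Perm (Fin (r + 1)) :=
  Equiv.swap (k : Fin (r + 1)) ((k + 1 : ℕ) : Fin (r + 1))

/-- The permutation `s_{i_N} s_{i_{N−1}} ⋯ s_{i_{k+2}} s_{i_{k+1}}` used to define
`γ_{k+1}` from the word `w` (here `k` is 0-indexed). -/
def piPerm (r : ℕ) (w : List ℕ) (k : ℕ) : Equiv.Perm (Fin (r + 1)) :=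
  (((w.drop (k + 1)).reverse).map (sT r)).prod

/-- The first index of the positive root `γ_{k+1} = e_{π(a)} − e_{π(a+1)}`, where
`α_{i_{k+1}} = e_a − e_{a+1}` (0-indexed `k`). -/
def gFst (r : ℕ) (w : List ℕ) (k : ℕ) : Fin (r + 1) :=
  piPerm r w k ((w.getD k 0 : ℕ) : Fin (r + 1))

/-- The second index of the positive root `γ_{k+1}`. -/
def gSnd (r : ℕ) (w : List ℕ) (k : ℕ) : Fin (r + 1) :=
  piPerm r w k ((w.getD k 0 + 1 : ℕ) : Fin (r + 1))

variable (F : Type*) [Field F]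

/-- The elementary unipotent `e_{γ_{k+1}}(t) = 1 + t·E_{x,y}` for the root
`γ_{k+1} = e_x − e_y` (0-indexed `k`). -/
def ePosM (r : ℕ) (w : List ℕ) (k : ℕ) (t : F) :
    Matrix (Fin (r + 1)) (Fin (r + 1)) F :=
  1 + Matrix.single (gFst r w k) (gSnd r w k) t

/-- The elementary unipotent `e_{−γ_{k+1}}(t) = 1 + t·E_{y,x}` for the root
`γ_{k+1} = e_x − e_y` (0-indexed `k`). -/
def eNegM (r : ℕ) (w : List ℕ) (k : ℕ) (t : F) :
    Matrix (Fin (r + 1)) (Fin (r + 1)) F :=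
  1 + Matrix.single (gSnd r w k) (gFst r w k) t

/-- The set `G_k` (1-based `k`): all products
`(∏_{j=1}^{k−1} e_{−γ_j}(t_j)) · (∏_{j=k+1}^{N} e_{γ_j}(t_j))`, factors taken in
increasing order of `j`, with `N = r(r+1)/2`. -/
def cellG (r : ℕ) (w : List ℕ) (k : ℕ) :
    Set (Matrix (Fin (r + 1)) (Fin (r + 1)) F) :=
  {g | ∃ t : ℕ → F,
    g = (((List.range (k - 1)).map fun j => eNegM F r w j (t j)).prod) *
        (((List.range (r * (r + 1) / 2 - k)).map fun j =>
            ePosM F r w (k + j) (t (k + j))).prod)}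


/-!
Put `c = s_{i_{k+1}} ⋯ s_{i_N}` and let `U_c` be the matrices that agree with the identity outside
the positions `(p, q)` with `c q < c p`, a conjugate of the lower unitriangular group. Peeling
letters off the reduced word shows that the inversion set of `c` is `{γ_{k+1}, …, γ_N}` and that
`c` maps `γ_k` to a simple root. Gaussian elimination inside `U_c` writes each of its elements as a
lower times an upper unitriangular matrix of `U_c`, and these two factors are exactly the ordered
products of root subgroups for `-γ_1, …, -γ_k` and for `γ_{k+1}, …, γ_N`. Hence `G_k` is the set of
matrices of `U_c` whose `-γ_k` entry vanishes. Because `γ_k` becomes simple, that entry is additive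
on `U_c`, so conjugation by `e_{-γ_k}(z)` preserves `G_k`; uniqueness is cancellation of
`e_{-γ_k}(z)`.
-/

open Matrix Finset
open scoped Pointwise

section Pattern

variable {n R : Type*}

def pairsBetween (f : ℕ → n × n) (j m : ℕ) (p q : n) : Prop :=
  ∃ i, j ≤ i ∧ i < m ∧ f i = (p, q)

lemma pairsBetween_comp_add {f : ℕ → n × n} {k j m : ℕ} {p q : n} :
    pairsBetween (fun i => f (i + k)) j m p q ↔ pairsBetween f (j + k) (m + k) p q := by
  constructor
  · rintro ⟨i, hji, him, hi⟩
    exact ⟨i + k, by omega, by omega, hi⟩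
  · rintro ⟨i, hji, him, hi⟩
    exact ⟨i - k, by omega, by omega, by simpa [Nat.sub_add_cancel (show k ≤ i by omega)] using hi⟩

lemma pairsBetween_swap {f : ℕ → n × n} {j m : ℕ} {p q : n} :
    pairsBetween (fun i => (f i).swap) j m p q ↔ pairsBetween f j m q p := by
  simp [pairsBetween, Prod.swap_eq_iff_eq_swap]

variable [DecidableEq n] [CommRing R]

def unipotentPattern (S : n → n → Prop) : Set (Matrix n n R) :=
  {M | ∀ p q, ¬ S p q → M p q = (1 : Matrix n n R) p q}

variable {S S' : n → n → Prop}

lemma one_mem_unipotentPattern : (1 : Matrix n n R) ∈ unipotentPattern S :=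
  fun _ _ _ => rfl

lemma unipotentPattern_mono (h : ∀ p q, S p q → S' p q) :
    unipotentPattern (R := R) S ⊆ unipotentPattern S' :=
  fun _ hM p q hpq => hM p q fun hs => hpq (h p q hs)

lemma transvection_mem_unipotentPattern {i j : n} (hij : S i j) (c : R) :
    transvection i j c ∈ unipotentPattern S := by
  intro p q hpq
  have : ¬(i = p ∧ j = q) := by rintro ⟨rfl, rfl⟩; exact hpq hij
  simp [transvection, single_apply_of_ne _ _ _ _ _ this]

variable [Fintype n]

lemma mul_mem_unipotentPattern (htrans : ∀ a b c, S a b → S b c → S a c) {M N : Matrix n n R}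
    (hM : M ∈ unipotentPattern S) (hN : N ∈ unipotentPattern S) :
    M * N ∈ unipotentPattern S := by
  intro p q hpq
  have hterm : ∀ u, M p u * N u q = (1 : Matrix n n R) p u * (1 : Matrix n n R) u q := by
    intro u
    by_cases hpu : S p u
    · rw [hN u q fun huq => hpq (htrans p u q hpu huq)]
      rcases eq_or_ne u q with rfl | huq
      · rw [hM p u hpq]
      · simp [one_apply_ne huq]
    · rw [hM p u hpu]
      rcases eq_or_ne p u with rfl | hpu'
      · rw [hN p q hpq]
      · simp [one_apply_ne hpu']
  rw [mul_apply, sum_congr rfl fun u _ => hterm u, ← mul_apply, one_mul]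

lemma list_prod_mem_unipotentPattern (htrans : ∀ a b c, S a b → S b c → S a c)
    {l : List (Matrix n n R)} (hl : ∀ M ∈ l, M ∈ unipotentPattern S) :
    l.prod ∈ unipotentPattern S :=
  List.prod_induction _ (fun _ _ => mul_mem_unipotentPattern htrans) one_mem_unipotentPattern hl

lemma mul_apply_eq_add_of_mem_unipotentPattern (hirr : ∀ a, ¬ S a a) {M N : Matrix n n R}
    (hM : M ∈ unipotentPattern S) (hN : N ∈ unipotentPattern S) {p q : n} (hpq : p ≠ q)
    (hcov : ∀ u, ¬(S p u ∧ S u q)) :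
    (M * N) p q = M p q + N p q := by
  rw [mul_apply, sum_eq_add p q hpq, hM p p (hirr p), hN q q (hirr q), one_apply_eq,
    one_apply_eq, one_mul, mul_one, add_comm]
  · intro u _ ⟨hup, huq⟩
    by_cases hpu : S p u
    · rw [hN u q fun h => hcov u ⟨hpu, h⟩, one_apply_ne huq, mul_zero]
    · rw [hM p u hpu, one_apply_ne hup.symm, zero_mul]
  all_goals simp

lemma exists_eq_transvection_mul_of_mem_unipotentPattern {u v : n} (huv : u ≠ v)
    (hsub : ∀ p q, S p q → S' p q ∨ (p = u ∧ q = v)) (hrow : ∀ q, S v q → S' u q)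
    {M : Matrix n n R} (hM : M ∈ unipotentPattern S) :
    ∃ c, ∃ M' ∈ unipotentPattern S', M = transvection u v c * M' := by
  refine ⟨M u v, transvection u v (-M u v) * M, fun p q hpq => ?_, ?_⟩
  · have hSpq : ¬ S p q ∨ (p = u ∧ q = v) :=
      or_iff_not_imp_left.mpr fun h => (hsub p q (not_not.mp h)).resolve_left hpq
    rcases eq_or_ne p u with rfl | hp
    · rw [transvection_mul_apply_same]
      rcases eq_or_ne q v with rfl | hq
      · rw [hM q q fun h => hpq (hrow q h), one_apply_eq, one_apply_ne huv]
        ring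
      · rw [hM p q (hSpq.resolve_right fun h => hq h.2), hM v q fun h => hpq (hrow q h),
          one_apply_ne (Ne.symm hq), mul_zero, add_zero]
    · rw [transvection_mul_apply_of_ne _ _ _ _ hp, hM p q (hSpq.resolve_right fun h => hp h.1)]
  · rw [← mul_assoc, transvection_mul_transvection_same _ _ huv, add_neg_cancel,
      transvection_zero, one_mul]

theorem unipotentPattern_pairsBetween_eq_range (f : ℕ → n × n) (m : ℕ)
    (htrans : ∀ j a b c, pairsBetween f j m a b → pairsBetween f j m b c → pairsBetween f j m a c)
    (hne : ∀ i < m, (f i).1 ≠ (f i).2) :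
    unipotentPattern (R := R) (pairsBetween f 0 m) =
      Set.range fun t : ℕ → R =>
        ((List.range m).map fun i => transvection (f i).1 (f i).2 (t i)).prod := by
  refine subset_antisymm ?_ ?_
  · induction m generalizing f with
    | zero =>
      intro M hM
      refine ⟨0, ?_⟩
      ext p q
      exact (hM p q fun ⟨i, _, hi, _⟩ => by omega).symm
    | succ m ih =>
      intro M hM
      have hdiag : ∀ a, ¬ pairsBetween f 0 (m + 1) a a :=
        fun a ⟨i, _, hi, hfi⟩ => hne i hi (by simp [hfi])
      obtain ⟨c, M', hM', hMM'⟩ := exists_eq_transvection_mul_of_mem_unipotentPattern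
        (S' := pairsBetween (fun i => f (i + 1)) 0 m) (hne 0 (by omega))
        (fun p q ⟨i, _, hi, hfi⟩ => by
          rcases i with _ | i
          · exact Or.inr (by simp [hfi])
          · exact Or.inl ⟨i, by omega, by omega, hfi⟩)
        (fun q hq => by
          obtain ⟨i, _, hi, hfi⟩ := htrans 0 _ _ _ ⟨0, le_rfl, by omega, rfl⟩ hq
          rcases i with _ | i
          · obtain rfl : q = (f 0).2 := (congrArg Prod.snd hfi).symm
            exact absurd hq (hdiag _)
          · exact ⟨i, by omega, by omega, hfi⟩) hM
      obtain ⟨t, rfl⟩ := ih (fun i => f (i + 1))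
        (fun j a b c hab hbc => pairsBetween_comp_add.mpr
          (htrans _ _ _ _ (pairsBetween_comp_add.mp hab) (pairsBetween_comp_add.mp hbc)))
        (fun i hi => hne (i + 1) (by omega)) hM'
      refine ⟨fun | 0 => c | i + 1 => t i, ?_⟩
      simp only [List.range_succ_eq_map, List.map_cons, List.prod_cons, List.map_map,
        Function.comp_def]
      exact hMM'.symm
  · rintro _ ⟨t, rfl⟩
    refine list_prod_mem_unipotentPattern (htrans 0) ?_
    simp only [List.mem_map, List.mem_range]
    rintro _ ⟨i, hi, rfl⟩
    exact transvection_mem_unipotentPattern ⟨i, by omega, hi, rfl⟩ _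

end Pattern

section LU

variable {R : Type*} [CommRing R] {n : ℕ} {S : Fin n → Fin n → Prop}

/-- Row `m` has no lower entries left, so row operations with pivot row `m` clear the lower
entries of column `m` without leaving the pattern. -/
lemma exists_eq_mul_of_mem_unipotentPattern_column (htrans : ∀ a b c, S a b → S b c → S a c)
    (hirr : ∀ a, ¬ S a a) (m : Fin n) (P : Finset (Fin n)) {M : Matrix (Fin n) (Fin n) R}
    (hM : M ∈ unipotentPattern fun p q =>
      (S p q ∧ p < q) ∨ (S p q ∧ q < p ∧ (m < q ∨ (q = m ∧ p ∈ P)))) :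
    ∃ L ∈ unipotentPattern (fun p q => S p q ∧ q < p), ∃ M' ∈ unipotentPattern fun p q =>
      (S p q ∧ p < q) ∨ (S p q ∧ q < p ∧ m < q), M = L * M' := by
  induction P using Finset.induction_on generalizing M with
  | empty => exact ⟨1, one_mem_unipotentPattern, M, by simpa using hM, (one_mul M).symm⟩
  | insert u P _ ih =>
    by_cases hum : S u m ∧ m < u
    · obtain ⟨c, M', hM', rfl⟩ := exists_eq_transvection_mul_of_mem_unipotentPattern
        (S' := fun p q => (S p q ∧ p < q) ∨ (S p q ∧ q < p ∧ (m < q ∨ (q = m ∧ p ∈ P))))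
        hum.2.ne' (fun p q hpq => by
          by_cases h : p = u ∧ q = m
          · exact Or.inr h
          · left; simp only [mem_insert] at hpq; grind)
        (fun q hq => by
          have hmq : S m q ∧ m < q := by grind
          have huq := htrans u m q hum.1 hmq.1
          rcases lt_trichotomy u q with h | rfl | h
          · exact Or.inl ⟨huq, h⟩
          · exact absurd huq (hirr u)
          · exact Or.inr ⟨huq, h, Or.inl hmq.2⟩) hM
      obtain ⟨L, hL, M'', hM'', rfl⟩ := ih hM'
      refine ⟨_ * L, ?_, M'', hM'', (mul_assoc _ _ _).symm⟩
      exact mul_mem_unipotentPattern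
        (fun a b c hab hbc => ⟨htrans a b c hab.1 hbc.1, hbc.2.trans hab.2⟩)
        (transvection_mem_unipotentPattern (S := fun p q => S p q ∧ q < p) hum c) hL
    · refine ih (unipotentPattern_mono (fun p q hpq => ?_) hM)
      simp only [mem_insert] at hpq
      grind

theorem unipotentPattern_subset_mul (htrans : ∀ a b c, S a b → S b c → S a c)
    (hirr : ∀ a, ¬ S a a) :
    unipotentPattern (R := R) S ⊆
      unipotentPattern (R := R) (fun p q => S p q ∧ q < p) *
        unipotentPattern (R := R) (fun p q => S p q ∧ p < q) := by
  have hlow : ∀ a b c, S a b ∧ b < a → S b c ∧ c < b → S a c ∧ c < a :=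
    fun a b c hab hbc => ⟨htrans a b c hab.1 hbc.1, hbc.2.trans hab.2⟩
  suffices h : ∀ j ≤ n, ∀ M ∈ unipotentPattern (R := R) fun p q =>
      (S p q ∧ p < q) ∨ (S p q ∧ q < p ∧ j ≤ q.val),
      M ∈ unipotentPattern (R := R) (fun p q => S p q ∧ q < p) *
        unipotentPattern (R := R) (fun p q => S p q ∧ p < q) from
    fun M hM => h 0 (Nat.zero_le n) M (unipotentPattern_mono (fun p q h => by grind) hM)
  intro j hj
  induction hj using Nat.decreasingInduction with
  | self =>
    intro M hM
    refine ⟨1, one_mem_unipotentPattern, M, unipotentPattern_mono (fun p q h => ?_) hM, one_mul M⟩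
    grind
  | of_succ j hj ih =>
    intro M hM
    obtain ⟨L, hL, M', hM', rfl⟩ := exists_eq_mul_of_mem_unipotentPattern_column htrans hirr
      ⟨j, hj⟩ univ (unipotentPattern_mono (fun p q h => by grind [Fin.lt_def, Fin.ext_iff]) hM)
    obtain ⟨L', hL', U, hU, rfl⟩ :=
      ih M' (unipotentPattern_mono (fun p q h => by grind [Fin.lt_def]) hM')
    exact ⟨L * L', mul_mem_unipotentPattern hlow hL hL', U, hU, mul_assoc _ _ _⟩

theorem unipotentPattern_mul_eq_setOf (htrans : ∀ a b c, S a b → S b c → S a c)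
    (hirr : ∀ a, ¬ S a a) {x y : Fin n} (hxy : x < y) (hcov : ∀ u, ¬(S y u ∧ S u x)) :
    unipotentPattern (R := R) (fun p q => S p q ∧ q < p ∧ (p, q) ≠ (y, x)) *
        unipotentPattern (R := R) (fun p q => S p q ∧ p < q) =
      {M | M ∈ unipotentPattern S ∧ M y x = 0} := by
  have hlow := unipotentPattern_mono (R := R) (S := fun p q => S p q ∧ q < p ∧ (p, q) ≠ (y, x))
    fun _ _ h => h.1
  have hup := unipotentPattern_mono (R := R) (S := fun p q => S p q ∧ p < q) fun _ _ h => h.1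
  have hUyx : ∀ U ∈ unipotentPattern (R := R) (fun p q => S p q ∧ p < q), U y x = 0 :=
    fun U hU => by rw [hU y x fun h => lt_asymm hxy h.2, one_apply_ne hxy.ne']
  ext M
  constructor
  · intro hM
    obtain ⟨L, hL, U, hU, rfl⟩ := Set.mem_mul.mp hM
    refine ⟨mul_mem_unipotentPattern htrans (hlow hL) (hup hU), ?_⟩
    rw [mul_apply_eq_add_of_mem_unipotentPattern hirr (hlow hL) (hup hU) hxy.ne' hcov,
      hL y x fun h => h.2.2 rfl, one_apply_ne hxy.ne', hUyx U hU, add_zero]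
  · rintro ⟨hM, hMyx⟩
    obtain ⟨L, hL, U, hU, rfl⟩ := Set.mem_mul.mp (unipotentPattern_subset_mul htrans hirr hM)
    have hL' := unipotentPattern_mono (fun _ _ h => h.1) hL
    rw [mul_apply_eq_add_of_mem_unipotentPattern hirr hL' (hup hU) hxy.ne' hcov, hUyx U hU,
      add_zero] at hMyx
    refine Set.mem_mul.mpr ⟨L, fun p q hpq => ?_, U, hU, rfl⟩
    by_cases h : (p, q) = (y, x)
    · obtain ⟨rfl, rfl⟩ := Prod.mk.inj h
      rw [hMyx, one_apply_ne hxy.ne']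
    · exact hL p q fun h' => hpq ⟨h'.1, h'.2, h⟩

end LU

theorem existsUnique_transvection_mul_eq_mul_transvection {n R : Type*} [Fintype n]
    [DecidableEq n] [CommRing R] {S : n → n → Prop} (htrans : ∀ a b c, S a b → S b c → S a c)
    (hirr : ∀ a, ¬ S a a) {x y : n} (hyx : S y x) (hcov : ∀ u, ¬(S y u ∧ S u x)) (c : R)
    {g : Matrix n n R} (hg : g ∈ unipotentPattern S) (hgyx : g y x = 0) :
    ∃! g' : Matrix n n R, (g' ∈ unipotentPattern S ∧ g' y x = 0) ∧
      transvection y x c * g = g' * transvection y x c := by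
  have hne : y ≠ x := fun h => hirr y (by rwa [← h] at hyx)
  have hinv : ∀ d e : R, d + e = 0 → transvection y x d * transvection y x e = 1 := fun d e h => by
    rw [transvection_mul_transvection_same _ _ hne, h, transvection_zero]
  have he := transvection_mem_unipotentPattern (R := R) hyx
  have hcg := mul_mem_unipotentPattern htrans (he c) hg
  refine ⟨transvection y x c * g * transvection y x (-c),
    ⟨⟨mul_mem_unipotentPattern htrans hcg (he (-c)), ?_⟩, ?_⟩, ?_⟩
  · rw [mul_apply_eq_add_of_mem_unipotentPattern hirr hcg (he (-c)) hne hcov,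
      mul_apply_eq_add_of_mem_unipotentPattern hirr (he c) hg hne hcov, hgyx]
    simp [transvection, one_apply_ne hne]
  · rw [mul_assoc _ (transvection y x (-c)), hinv _ _ (neg_add_cancel c), mul_one]
  · rintro g' ⟨-, hg'⟩
    rw [hg', mul_assoc, hinv _ _ (add_neg_cancel c), mul_one]

section Inversions

variable {ι : Type*} [LinearOrder ι] [Fintype ι]

def inversions (σ : Equiv.Perm ι) : Finset (ι × ι) :=
  {x | x.1 < x.2 ∧ σ x.2 < σ x.1}

lemma mem_inversions {σ : Equiv.Perm ι} {x y : ι} :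
    (x, y) ∈ inversions σ ↔ x < y ∧ σ y < σ x := by
  simp [inversions]

@[simp]
lemma inversions_one : inversions (1 : Equiv.Perm ι) = ∅ := by
  ext ⟨x, y⟩
  simpa [mem_inversions] using le_of_lt

lemma mem_inversions_trans {σ : Equiv.Perm ι} {a b c : ι} (hab : (a, b) ∈ inversions σ)
    (hbc : (b, c) ∈ inversions σ) : (a, c) ∈ inversions σ := by
  rw [mem_inversions] at *
  exact ⟨hab.1.trans hbc.1, hbc.2.trans hab.2⟩

lemma mem_inversions_and_not_mem_trans {σ τ : Equiv.Perm ι} {a b c : ι}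
    (hab : (a, b) ∈ inversions σ ∧ (a, b) ∉ inversions τ)
    (hbc : (b, c) ∈ inversions σ ∧ (b, c) ∉ inversions τ) :
    (a, c) ∈ inversions σ ∧ (a, c) ∉ inversions τ := by
  refine ⟨mem_inversions_trans hab.1 hbc.1, ?_⟩
  simp only [mem_inversions, not_and, not_lt] at *
  exact fun _ => (hab.2 hab.1.1).trans (hbc.2 hbc.1.1)

lemma mem_inversions_revPerm {n : ℕ} {x y : Fin n} :
    (x, y) ∈ inversions (Fin.revPerm : Equiv.Perm (Fin n)) ↔ x < y := by
  simp [mem_inversions, Fin.rev_lt_rev]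

lemma card_inversions_revPerm (n : ℕ) :
    #(inversions (Fin.revPerm : Equiv.Perm (Fin n))) = n.choose 2 := by
  have : inversions (Fin.revPerm : Equiv.Perm (Fin n)) =
      {x ∈ (univ ×ˢ univ : Finset (Fin n × Fin n)) | x.1 < x.2} := by
    ext ⟨x, y⟩
    simp [mem_inversions_revPerm]
  rw [this, card_product_filter_lt, card_univ, Fintype.card_fin]

end Inversions

section ReducedWords

variable {r : ℕ}

lemma eq_cast_iff_val_eq {a : ℕ} (ha : a < r + 1) (x : Fin (r + 1)) :
    x = (a : Fin (r + 1)) ↔ (x : ℕ) = a := by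
  rw [Fin.ext_iff, Fin.val_cast_of_lt ha]

lemma cast_covBy_cast_succ {a : ℕ} (ha : a < r) :
    (a : Fin (r + 1)) ⋖ ((a + 1 : ℕ) : Fin (r + 1)) := by
  rw [Fin.covBy_iff, Fin.val_cast_of_lt (by omega), Fin.val_cast_of_lt (by omega)]
  exact Order.covBy_add_one a

lemma val_sT_apply {a : ℕ} (ha : a < r) (x : Fin (r + 1)) :
    (sT r a x : ℕ) = if (x : ℕ) = a then a + 1 else if (x : ℕ) = a + 1 then a else x := by
  have hA : ((a : Fin (r + 1)) : ℕ) = a := Fin.val_cast_of_lt (by omega)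
  have hB : (((a + 1 : ℕ) : Fin (r + 1)) : ℕ) = a + 1 := Fin.val_cast_of_lt (by omega)
  rw [sT, Equiv.swap_apply_def]
  simp only [Fin.ext_iff, hA, hB]
  split_ifs <;> first | rfl | assumption

lemma sT_apply_lt_sT_apply_iff {a : ℕ} (ha : a < r) {x y : Fin (r + 1)}
    (hxy : ¬(x = a ∧ y = (a + 1 : ℕ))) (hyx : ¬(x = (a + 1 : ℕ) ∧ y = a)) :
    sT r a x < sT r a y ↔ x < y := by
  rw [eq_cast_iff_val_eq (by omega), eq_cast_iff_val_eq (by omega)] at hxy hyx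
  rw [Fin.lt_def, Fin.lt_def, val_sT_apply ha, val_sT_apply ha]
  split_ifs <;> omega

lemma inversions_sT_mul {a : ℕ} (ha : a < r) {σ : Equiv.Perm (Fin (r + 1))}
    (h : σ⁻¹ a < σ⁻¹ (a + 1 : ℕ)) :
    inversions (sT r a * σ) = insert (σ⁻¹ a, σ⁻¹ (a + 1 : ℕ)) (inversions σ) := by
  ext ⟨x, y⟩
  simp only [mem_insert, mem_inversions, Prod.mk.injEq, Equiv.Perm.mul_apply,
    Equiv.Perm.eq_inv_iff_eq]
  by_cases hxy : σ x = a ∧ σ y = (a + 1 : ℕ)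
  · obtain ⟨rfl, rfl⟩ : x = σ⁻¹ a ∧ y = σ⁻¹ (a + 1 : ℕ) :=
      ⟨Equiv.Perm.eq_inv_iff_eq.mpr hxy.1, Equiv.Perm.eq_inv_iff_eq.mpr hxy.2⟩
    simp only [Equiv.Perm.coe_inv, Equiv.apply_symm_apply, sT, Equiv.swap_apply_left,
      Equiv.swap_apply_right]
    exact iff_of_true ⟨h, (cast_covBy_cast_succ ha).lt⟩ (Or.inl ⟨trivial, trivial⟩)
  by_cases hyx : σ x = (a + 1 : ℕ) ∧ σ y = a
  · obtain ⟨rfl, rfl⟩ : x = σ⁻¹ (a + 1 : ℕ) ∧ y = σ⁻¹ a :=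
      ⟨Equiv.Perm.eq_inv_iff_eq.mpr hyx.1, Equiv.Perm.eq_inv_iff_eq.mpr hyx.2⟩
    exact iff_of_false (fun h' => lt_asymm h h'.1) (not_or.mpr ⟨hxy, fun h' => lt_asymm h h'.1⟩)
  rw [sT_apply_lt_sT_apply_iff ha (fun h' => hyx ⟨h'.2, h'.1⟩) (fun h' => hxy ⟨h'.2, h'.1⟩)]
  exact (or_iff_right hxy).symm

lemma card_inversions_sT_mul {a : ℕ} (ha : a < r) {σ : Equiv.Perm (Fin (r + 1))}
    (h : σ⁻¹ a < σ⁻¹ (a + 1 : ℕ)) :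
    #(inversions (sT r a * σ)) = #(inversions σ) + 1 := by
  rw [inversions_sT_mul ha h, card_insert_of_notMem]
  simp only [mem_inversions, Equiv.Perm.coe_inv, Equiv.apply_symm_apply]
  exact fun h' => lt_asymm h'.2 (cast_covBy_cast_succ ha).lt

lemma card_inversions_sT_mul_of_not_lt {a : ℕ} (ha : a < r) {σ : Equiv.Perm (Fin (r + 1))}
    (h : ¬ σ⁻¹ a < σ⁻¹ (a + 1 : ℕ)) :
    #(inversions (sT r a * σ)) + 1 = #(inversions σ) := by
  have hlt : σ⁻¹ (a + 1 : ℕ) < σ⁻¹ a :=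
    (not_lt.mp h).lt_of_ne (σ⁻¹.injective.ne (cast_covBy_cast_succ ha).lt.ne')
  have := card_inversions_sT_mul ha (σ := sT r a * σ) (by simpa [sT, _root_.mul_inv_rev] using hlt)
  rw [← mul_assoc, show sT r a * sT r a = 1 from Equiv.swap_mul_self _ _, one_mul] at this
  omega

def wordPerm (r : ℕ) (v : List ℕ) : Equiv.Perm (Fin (r + 1)) :=
  (v.map (sT r)).prod

@[simp]
lemma wordPerm_nil : wordPerm r [] = 1 := rfl

@[simp]
lemma wordPerm_cons (a : ℕ) (v : List ℕ) : wordPerm r (a :: v) = sT r a * wordPerm r v := by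
  simp [wordPerm]

lemma piPerm_eq_inv (v : List ℕ) (j : ℕ) : piPerm r v j = (wordPerm r (v.drop (j + 1)))⁻¹ := by
  rw [wordPerm, List.prod_inv_reverse, List.map_map, piPerm, List.map_reverse]
  congr 3

lemma card_inversions_wordPerm_le {v : List ℕ} (hv : ∀ a ∈ v, a < r) :
    #(inversions (wordPerm r v)) ≤ v.length := by
  induction v with
  | nil => simp
  | cons a v ih =>
    have ha := hv a List.mem_cons_self
    have ih := ih fun b hb => hv b (List.mem_cons_of_mem a hb)
    rw [wordPerm_cons, List.length_cons]
    by_cases h : (wordPerm r v)⁻¹ a < (wordPerm r v)⁻¹ (a + 1 : ℕ)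
    · rw [card_inversions_sT_mul ha h]
      omega
    · have := card_inversions_sT_mul_of_not_lt ha h
      omega

def IsReducedWord (r : ℕ) (v : List ℕ) : Prop :=
  #(inversions (wordPerm r v)) = v.length

lemma isReducedWord_of_wordPerm_eq_revPerm {w : List ℕ} (hlen : w.length = r * (r + 1) / 2)
    (h : wordPerm r w = Fin.revPerm) : IsReducedWord r w := by
  rw [IsReducedWord, h, card_inversions_revPerm, Nat.choose_two_right, hlen, Nat.add_sub_cancel,
    mul_comm]

lemma IsReducedWord.tail_and_lt {a : ℕ} {v : List ℕ} (hv : ∀ b ∈ a :: v, b < r)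
    (hred : IsReducedWord r (a :: v)) :
    IsReducedWord r v ∧ (wordPerm r v)⁻¹ a < (wordPerm r v)⁻¹ (a + 1 : ℕ) := by
  have ha := hv a List.mem_cons_self
  have hle := card_inversions_wordPerm_le (r := r) fun b hb => hv b (List.mem_cons_of_mem a hb)
  rw [IsReducedWord, wordPerm_cons, List.length_cons] at hred
  by_cases h : (wordPerm r v)⁻¹ a < (wordPerm r v)⁻¹ (a + 1 : ℕ)
  · rw [card_inversions_sT_mul ha h] at hred
    exact ⟨by rw [IsReducedWord]; omega, h⟩
  · have := card_inversions_sT_mul_of_not_lt ha h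
    omega

lemma IsReducedWord.drop {w : List ℕ} (hw : ∀ a ∈ w, a < r) (hred : IsReducedWord r w) (m : ℕ) :
    IsReducedWord r (w.drop m) := by
  induction m generalizing w with
  | zero => exact hred
  | succ m ih =>
    rcases w with _ | ⟨a, w⟩
    · exact hred
    · exact ih (fun b hb => hw b (List.mem_cons_of_mem a hb)) (hred.tail_and_lt hw).1

end ReducedWords

section Roots

variable {r : ℕ}

def root (r : ℕ) (v : List ℕ) (i : ℕ) : Fin (r + 1) × Fin (r + 1) :=
  (gFst r v i, gSnd r v i)

lemma root_cons_zero (a : ℕ) (v : List ℕ) :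
    root r (a :: v) 0 = ((wordPerm r v)⁻¹ a, (wordPerm r v)⁻¹ (a + 1 : ℕ)) := by
  simp [root, gFst, gSnd, piPerm_eq_inv]

lemma root_cons_succ (a : ℕ) (v : List ℕ) (i : ℕ) : root r (a :: v) (i + 1) = root r v i := rfl

lemma root_drop (w : List ℕ) (m i : ℕ) : root r (w.drop m) i = root r w (m + i) := by
  induction m generalizing w with
  | zero => simp
  | succ m ih =>
    rcases w with _ | ⟨a, w⟩
    · rfl
    · rw [List.drop_succ_cons, ih, show m + 1 + i = m + i + 1 by omega, root_cons_succ]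

lemma mem_inversions_wordPerm_iff {v : List ℕ} (hv : ∀ a ∈ v, a < r) (hred : IsReducedWord r v)
    {x y : Fin (r + 1)} :
    (x, y) ∈ inversions (wordPerm r v) ↔ ∃ i < v.length, root r v i = (x, y) := by
  induction v with
  | nil => simp
  | cons a v ih =>
    obtain ⟨hred', hlt⟩ := hred.tail_and_lt hv
    rw [wordPerm_cons, inversions_sT_mul (hv a List.mem_cons_self) hlt, mem_insert,
      ih (fun b hb => hv b (List.mem_cons_of_mem a hb)) hred', List.length_cons,
      Nat.exists_lt_succ_left, root_cons_zero, eq_comm]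
    simp only [root_cons_succ]

variable {w : List ℕ}

lemma mem_inversions_wordPerm_drop_iff (hw : ∀ a ∈ w, a < r) (hred : IsReducedWord r w) (m : ℕ)
    {x y : Fin (r + 1)} :
    (x, y) ∈ inversions (wordPerm r (w.drop m)) ↔ pairsBetween (root r w) m w.length x y := by
  rw [mem_inversions_wordPerm_iff (fun a ha => hw a (List.mem_of_mem_drop ha)) (hred.drop hw m)]
  constructor
  · rintro ⟨i, hi, hroot⟩
    exact ⟨m + i, by omega, by simp at hi; omega, by rwa [← root_drop]⟩
  · rintro ⟨i, hmi, hi, hroot⟩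
    exact ⟨i - m, by simp; omega, by rwa [root_drop, Nat.add_sub_cancel' hmi]⟩

lemma root_mem_inversions (hw : ∀ a ∈ w, a < r) (hred : IsReducedWord r w) {i : ℕ}
    (hi : i < w.length) : root r w i ∈ inversions (wordPerm r (w.drop i)) :=
  (mem_inversions_wordPerm_drop_iff hw hred i).mpr ⟨i, le_rfl, hi, rfl⟩

lemma wordPerm_drop_succ_covBy (hw : ∀ a ∈ w, a < r) {i : ℕ} (hi : i < w.length) :
    wordPerm r (w.drop (i + 1)) (gFst r w i) ⋖ wordPerm r (w.drop (i + 1)) (gSnd r w i) := by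
  simp only [gFst, gSnd, piPerm_eq_inv, Equiv.Perm.coe_inv, Equiv.apply_symm_apply]
  exact cast_covBy_cast_succ (hw _ (by rw [List.getD_eq_getElem _ _ hi]; exact List.getElem_mem hi))

lemma pairsBetween_root_iff (hw : ∀ a ∈ w, a < r) (hred : IsReducedWord r w) {j m : ℕ}
    (hm : m ≤ w.length) {x y : Fin (r + 1)} :
    pairsBetween (root r w) j m x y ↔
      (x, y) ∈ inversions (wordPerm r (w.drop j)) ∧
        (x, y) ∉ inversions (wordPerm r (w.drop m)) := by
  simp only [mem_inversions_wordPerm_drop_iff hw hred]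
  constructor
  · rintro ⟨i, hji, him, hroot⟩
    refine ⟨⟨i, hji, by omega, hroot⟩, fun ⟨i', hmi', hi', hroot'⟩ => ?_⟩
    have hnot := (wordPerm_drop_succ_covBy hw (i := i) (by omega)).lt
    have hmem : root r w i ∈ inversions (wordPerm r (w.drop (i + 1))) := by
      rw [hroot, mem_inversions_wordPerm_drop_iff hw hred]
      exact ⟨i', by omega, hi', hroot'⟩
    exact lt_asymm (mem_inversions.mp hmem).2 hnot
  · rintro ⟨⟨i, hji, hi, hroot⟩, hnot⟩
    exact ⟨i, hji, lt_of_not_ge fun hmi => hnot ⟨i, hmi, hi, hroot⟩, hroot⟩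

lemma pairsBetween_root_zero_iff (hw : ∀ a ∈ w, a < r) (hred : IsReducedWord r w)
    (hw0 : wordPerm r w = Fin.revPerm) {k : ℕ} (hk : k ≤ w.length) {x y : Fin (r + 1)} :
    pairsBetween (root r w) 0 k x y ↔
      x < y ∧ wordPerm r (w.drop k) x < wordPerm r (w.drop k) y := by
  rw [pairsBetween_root_iff hw hred hk, List.drop_zero, hw0, mem_inversions_revPerm,
    mem_inversions, not_and, not_lt]
  exact and_congr_right fun hxy =>
    ⟨fun h => (h hxy).lt_of_ne ((wordPerm r _).injective.ne hxy.ne), fun h _ => h.le⟩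

lemma pairsBetween_root_swap_iff (hw : ∀ a ∈ w, a < r) (hred : IsReducedWord r w)
    (hw0 : wordPerm r w = Fin.revPerm) {k : ℕ} (hk1 : 1 ≤ k) (hk2 : k ≤ w.length)
    {p q : Fin (r + 1)} :
    pairsBetween (fun i => (root r w i).swap) 0 (k - 1) p q ↔
      wordPerm r (w.drop k) q < wordPerm r (w.drop k) p ∧ q < p ∧
        (p, q) ≠ (gSnd r w (k - 1), gFst r w (k - 1)) := by
  rw [pairsBetween_swap]
  constructor
  · intro h
    obtain ⟨hqp, hc⟩ := (pairsBetween_root_zero_iff hw hred hw0 hk2).mp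
      (let ⟨i, hi0, hi, hroot⟩ := h; ⟨i, hi0, by omega, hroot⟩)
    refine ⟨hc, hqp, fun hpq => ((pairsBetween_root_iff hw hred (by omega)).mp h).2 ?_⟩
    simp only [Prod.mk.injEq] at hpq
    rw [hpq.1, hpq.2]
    exact root_mem_inversions hw hred (by omega)
  · rintro ⟨hc, hqp, hne⟩
    obtain ⟨i, hi0, hi, hroot⟩ := (pairsBetween_root_zero_iff hw hred hw0 hk2).mpr ⟨hqp, hc⟩
    refine ⟨i, hi0, lt_of_le_of_ne (by omega) fun hik => hne ?_, hroot⟩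
    simp only [hik, root, Prod.mk.injEq] at hroot
    rw [hroot.1, hroot.2]

lemma pairsBetween_root_add_iff (hw : ∀ a ∈ w, a < r) (hred : IsReducedWord r w) {k j : ℕ}
    (hk : k ≤ w.length) {p q : Fin (r + 1)} :
    pairsBetween (fun i => root r w (i + k)) j (w.length - k) p q ↔
      (p, q) ∈ inversions (wordPerm r (w.drop (j + k))) := by
  rw [pairsBetween_comp_add, Nat.sub_add_cancel hk, mem_inversions_wordPerm_drop_iff hw hred]

end Roots

section Cell

variable {F} {r : ℕ} {w : List ℕ}

theorem cellG_eq_mul (r : ℕ) (w : List ℕ) (k : ℕ) :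
    cellG F r w k =
      Set.range (fun t : ℕ → F => ((List.range (k - 1)).map fun i =>
          transvection (root r w i).swap.1 (root r w i).swap.2 (t i)).prod) *
      Set.range (fun t : ℕ → F => ((List.range (r * (r + 1) / 2 - k)).map fun i =>
          transvection (root r w (i + k)).1 (root r w (i + k)).2 (t i)).prod) := by
  ext M
  simp only [cellG, Set.mem_mul, Set.mem_range, Set.mem_ofPred_eq]
  constructor
  · rintro ⟨t, rfl⟩
    refine ⟨_, ⟨t, rfl⟩, _, ⟨fun i => t (i + k), ?_⟩, rfl⟩
    simp only [ePosM, add_comm k]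
    rfl
  · rintro ⟨_, ⟨s, rfl⟩, _, ⟨s', rfl⟩, rfl⟩
    refine ⟨fun i => if i < k then s i else s' (i - k), ?_⟩
    congr 1 <;> refine congrArg List.prod (List.map_congr_left fun i hi => ?_) <;>
      rw [List.mem_range] at hi
    · simp only [eNegM, if_pos (show i < k by omega)]
      rfl
    · simp only [ePosM, if_neg (show ¬ k + i < k by omega), Nat.add_sub_cancel_left]
      rw [add_comm k]
      rfl

lemma range_prod_transvection_root_swap (hw : ∀ a ∈ w, a < r) (hred : IsReducedWord r w)
    (hw0 : wordPerm r w = Fin.revPerm) {k : ℕ} (hk1 : 1 ≤ k) (hk2 : k ≤ w.length) :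
    Set.range (fun t : ℕ → F => ((List.range (k - 1)).map fun i =>
        transvection (root r w i).swap.1 (root r w i).swap.2 (t i)).prod) =
      unipotentPattern fun p q => wordPerm r (w.drop k) q < wordPerm r (w.drop k) p ∧ q < p ∧
        (p, q) ≠ (gSnd r w (k - 1), gFst r w (k - 1)) := by
  have hrel : pairsBetween (fun i => (root r w i).swap) 0 (k - 1) = fun p q =>
      wordPerm r (w.drop k) q < wordPerm r (w.drop k) p ∧ q < p ∧
        (p, q) ≠ (gSnd r w (k - 1), gFst r w (k - 1)) := by
    funext p q
    exact propext (pairsBetween_root_swap_iff hw hred hw0 hk1 hk2)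
  rw [← hrel]
  refine (unipotentPattern_pairsBetween_eq_range _ _ (fun j a b c hab hbc => ?_)
    fun i hi => ?_).symm
  · simp only [pairsBetween_swap, pairsBetween_root_iff hw hred (show k - 1 ≤ w.length by omega)]
      at hab hbc ⊢
    exact mem_inversions_and_not_mem_trans hbc hab
  · exact (mem_inversions.mp (root_mem_inversions hw hred (i := i) (by omega))).1.ne'

lemma range_prod_transvection_root_add (hw : ∀ a ∈ w, a < r) (hred : IsReducedWord r w) {k : ℕ}
    (hk : k ≤ w.length) :
    Set.range (fun t : ℕ → F => ((List.range (w.length - k)).map fun i =>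
        transvection (root r w (i + k)).1 (root r w (i + k)).2 (t i)).prod) =
      unipotentPattern fun p q => wordPerm r (w.drop k) q < wordPerm r (w.drop k) p ∧ p < q := by
  have hrel : pairsBetween (fun i => root r w (i + k)) 0 (w.length - k) =
      fun p q => wordPerm r (w.drop k) q < wordPerm r (w.drop k) p ∧ p < q := by
    funext p q
    rw [pairsBetween_root_add_iff hw hred hk, zero_add, mem_inversions, and_comm]
  rw [← hrel]
  refine (unipotentPattern_pairsBetween_eq_range _ _ (fun j a b c hab hbc => ?_)
    fun i hi => ?_).symm
  · simp only [pairsBetween_root_add_iff hw hred hk] at hab hbc ⊢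
    exact mem_inversions_trans hab hbc
  · exact (mem_inversions.mp (root_mem_inversions hw hred (i := i + k) (by omega))).1.ne

theorem cellG_eq_setOf (hw : ∀ a ∈ w, a < r) (hw0 : wordPerm r w = Fin.revPerm)
    (hlen : w.length = r * (r + 1) / 2) {k : ℕ} (hk1 : 1 ≤ k) (hk2 : k ≤ r * (r + 1) / 2) :
    cellG F r w k = {M | M ∈ unipotentPattern (fun p q =>
      wordPerm r (w.drop k) q < wordPerm r (w.drop k) p) ∧
        M (gSnd r w (k - 1)) (gFst r w (k - 1)) = 0} := by
  have hred := isReducedWord_of_wordPerm_eq_revPerm hlen hw0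
  rw [← hlen] at hk2
  have hcov := wordPerm_drop_succ_covBy hw (i := k - 1) (by omega)
  rw [Nat.sub_add_cancel hk1] at hcov
  rw [cellG_eq_mul, ← hlen, range_prod_transvection_root_swap hw hred hw0 hk1 hk2,
    range_prod_transvection_root_add hw hred hk2]
  exact unipotentPattern_mul_eq_setOf
    (S := fun p q => wordPerm r (w.drop k) q < wordPerm r (w.drop k) p)
    (fun _ _ _ h1 h2 => h2.trans h1) (fun _ => lt_irrefl _)
    (mem_inversions.mp (root_mem_inversions hw hred (i := k - 1) (by omega))).1
    fun _ h => hcov.2 h.2 h.1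

end Cell

theorem commute_elementary_through_cell
    (r : ℕ) (w : List ℕ)
    (hlen : w.length = r * (r + 1) / 2)
    (hletters : ∀ i ∈ w, i < r)
    (hred : (w.map (sT r)).prod = Fin.revPerm)
    (k : ℕ) (hk1 : 1 ≤ k) (hk2 : k ≤ r * (r + 1) / 2)
    (z : F) (g : Matrix (Fin (r + 1)) (Fin (r + 1)) F)
    (hg : g ∈ cellG F r w k) :
    ∃! g' : Matrix (Fin (r + 1)) (Fin (r + 1)) F,
      g' ∈ cellG F r w k ∧
      eNegM F r w (k - 1) z * g = g' * eNegM F r w (k - 1) z := by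
  have hcovBy := wordPerm_drop_succ_covBy hletters (i := k - 1) (by omega)
  rw [Nat.sub_add_cancel hk1] at hcovBy
  rw [cellG_eq_setOf hletters hred hlen hk1 hk2] at hg ⊢
  exact existsUnique_transvection_mul_eq_mul_transvection
    (S := fun p q => wordPerm r (w.drop k) q < wordPerm r (w.drop k) p)
    (fun _ _ _ h1 h2 => h2.trans h1) (fun _ => lt_irrefl _) hcovBy.lt
    (fun _ h => hcovBy.2 h.2 h.1) z hg.1 hg.2
end

section
/- Let p be a prime and n ≥ 1. For every lower unitriangular matrix u ∈ GL_n(ℚ_p) and every permutation matrix w′, there exist an upper unitriangular matrix p₁ ∈ GL_n(ℚ_p), an invertible diagonal matrix h₁ ∈ GL_n(ℚ_p), a permutation matrix π₁, and an element j₁ of the Iwahori subgroup J, such that u·w′ = p₁·h₁·π₁·j₁. -/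
/-- The permutation matrix of `π ∈ S_n` (over `ℚ_p`): the 0-1 matrix whose column `j`
has its `1` in row `π j`. -/
noncomputable def permMat (p : ℕ) [Fact p.Prime] (n : ℕ) (π : Equiv.Perm (Fin n)) :
    Matrix (Fin n) (Fin n) ℚ_[p] :=
  fun i j => if π j = i then 1 else 0

/-- The (opposite) Iwahori subgroup of `GL_n(ℚ_p)`: matrices with entries in `ℤ_p`,
determinant a unit of `ℤ_p`, whose reduction mod `p` is lower triangular (i.e. the
entries strictly above the diagonal lie in `pℤ_p`). -/
def Iwahori (p : ℕ) [Fact p.Prime] (n : ℕ) : Set (Matrix (Fin n) (Fin n) ℚ_[p]) :=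
  {g | (∀ i j, ‖g i j‖ ≤ 1) ∧ ‖g.det‖ = 1 ∧ ∀ i j : Fin n, i < j → ‖g i j‖ < 1}

open Matrix

section IwahoriAux
variable {p : ℕ} [Fact p.Prime]


lemma padic_sum_norm_le {α : Type*} [DecidableEq α] (s : Finset α) (f : α → ℚ_[p]) {c : ℝ} (hc : 0 ≤ c)
    (h : ∀ a ∈ s, ‖f a‖ ≤ c) : ‖∑ a ∈ s, f a‖ ≤ c := by
  induction s using Finset.induction with
  | empty => simpa using hc
  | @insert x s hx ih =>
    rw [Finset.sum_insert hx]
    refine le_trans (Padic.nonarchimedean _ _) (max_le (h _ (Finset.mem_insert_self _ _)) ?_)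
    exact ih fun a ha => h a (Finset.mem_insert_of_mem ha)

lemma padic_sum_norm_lt {α : Type*} [DecidableEq α] (s : Finset α) (f : α → ℚ_[p]) {c : ℝ} (hc : 0 < c)
    (h : ∀ a ∈ s, ‖f a‖ < c) : ‖∑ a ∈ s, f a‖ < c := by
  induction s using Finset.induction with
  | empty => simpa using hc
  | @insert x s hx ih =>
    rw [Finset.sum_insert hx]
    refine lt_of_le_of_lt (Padic.nonarchimedean _ _) (max_lt (h _ (Finset.mem_insert_self _ _)) ?_)
    exact ih fun a ha => h a (Finset.mem_insert_of_mem ha)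

lemma perm_exists_lt {n : ℕ} (σ : Equiv.Perm (Fin n)) (h : σ ≠ 1) : ∃ i, σ i < i := by
  by_contra hc
  push_neg at hc
  apply h
  have hsum : ∑ i : Fin n, (fun j : Fin n => (j : ℕ)) (σ i) = ∑ i : Fin n, (i : ℕ) :=
    Equiv.sum_comp σ (fun j : Fin n => (j : ℕ))
  have hle : ∀ i ∈ (Finset.univ : Finset (Fin n)), (i : ℕ) ≤ ((σ i : Fin n) : ℕ) :=
    fun i _ => hc i
  have heq := (Finset.sum_eq_sum_iff_of_le hle).mp hsum.symm
  ext i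
  exact congrArg Fin.val (Fin.ext ((heq i (Finset.mem_univ i)).symm))

lemma norm_det_eq_one {n : ℕ} (m : Matrix (Fin n) (Fin n) ℚ_[p])
    (h1 : ∀ i j, ‖m i j‖ ≤ 1) (hd : ∀ i, m i i = 1)
    (hu : ∀ i j : Fin n, i < j → ‖m i j‖ < 1) : ‖m.det‖ = 1 := by
  rw [Matrix.det_apply']
  rw [← Finset.add_sum_erase Finset.univ _ (Finset.mem_univ (1 : Equiv.Perm (Fin n)))]
  have h1term : ((Equiv.Perm.sign (1 : Equiv.Perm (Fin n)) : ℤ) : ℚ_[p]) * ∏ i : Fin n, m ((1 : Equiv.Perm (Fin n)) i) i = 1 := by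
    simp [hd]
  rw [h1term]
  have hrest : ‖∑ σ ∈ Finset.univ.erase (1 : Equiv.Perm (Fin n)),
      ((Equiv.Perm.sign σ : ℤ) : ℚ_[p]) * ∏ i : Fin n, m (σ i) i‖ < 1 := by
    apply padic_sum_norm_lt _ _ one_pos
    intro σ hσ
    have hσ1 : σ ≠ 1 := (Finset.mem_erase.mp hσ).1
    obtain ⟨i₀, hi₀⟩ := perm_exists_lt σ hσ1
    have hsign : ‖((Equiv.Perm.sign σ : ℤ) : ℚ_[p])‖ = 1 := by
      rcases Int.units_eq_one_or (Equiv.Perm.sign σ) with h | h <;> simp [h]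
    rw [norm_mul, hsign, one_mul]
    have hprod : ∏ i : Fin n, ‖m (σ i) i‖ < 1 := by
      rw [← Finset.mul_prod_erase Finset.univ _ (Finset.mem_univ i₀)]
      calc ‖m (σ i₀) i₀‖ * ∏ i ∈ Finset.univ.erase i₀, ‖m (σ i) i‖
          ≤ ‖m (σ i₀) i₀‖ * 1 := by
            apply mul_le_mul_of_nonneg_left _ (norm_nonneg _)
            exact Finset.prod_le_one (fun i _ => norm_nonneg _) (fun i _ => h1 _ _)
        _ < 1 := by rw [mul_one]; exact hu _ _ hi₀
    calc ‖∏ i : Fin n, m (σ i) i‖ = ∏ i : Fin n, ‖m (σ i) i‖ := norm_prod _ _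
      _ < 1 := hprod
  have : ‖(1 : ℚ_[p])‖ ≠ ‖∑ σ ∈ Finset.univ.erase (1 : Equiv.Perm (Fin n)),
      ((Equiv.Perm.sign σ : ℤ) : ℚ_[p]) * ∏ i : Fin n, m (σ i) i‖ := by
    rw [norm_one]; exact fun h => absurd (h ▸ hrest) (lt_irrefl _)
  rw [Padic.add_eq_max_of_ne this, norm_one]
  exact max_eq_left hrest.le


lemma Iwahori_mul_mem {n : ℕ} {x y : Matrix (Fin n) (Fin n) ℚ_[p]}
    (hx : x ∈ Iwahori p n) (hy : y ∈ Iwahori p n) : x * y ∈ Iwahori p n := by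
  obtain ⟨hx1, hx2, hx3⟩ := hx
  obtain ⟨hy1, hy2, hy3⟩ := hy
  refine ⟨fun i j => ?_, ?_, fun i j hij => ?_⟩
  · rw [Matrix.mul_apply]
    apply padic_sum_norm_le _ _ zero_le_one
    intro k _
    calc ‖x i k * y k j‖ = ‖x i k‖ * ‖y k j‖ := norm_mul _ _
      _ ≤ 1 * 1 := mul_le_mul (hx1 _ _) (hy1 _ _) (norm_nonneg _) zero_le_one
      _ = 1 := mul_one 1
  · rw [Matrix.det_mul, norm_mul, hx2, hy2, mul_one]
  · rw [Matrix.mul_apply]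
    apply padic_sum_norm_lt _ _ one_pos
    intro k _
    rw [norm_mul]
    rcases le_or_gt k i with hk | hk
    · calc ‖x i k‖ * ‖y k j‖ ≤ 1 * ‖y k j‖ :=
        mul_le_mul_of_nonneg_right (hx1 _ _) (norm_nonneg _)
      _ = ‖y k j‖ := one_mul _
      _ < 1 := hy3 _ _ (lt_of_le_of_lt hk hij)
    · calc ‖x i k‖ * ‖y k j‖ ≤ ‖x i k‖ * 1 :=
        mul_le_mul_of_nonneg_left (hy1 _ _) (norm_nonneg _)
      _ = ‖x i k‖ := mul_one _
      _ < 1 := hx3 _ _ hk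

/-- Extend an `n × n` matrix to `(n+1) × (n+1)` along a pair of "co-point" equivalences. -/
noncomputable def lift {n : ℕ} (e f : Fin (n + 1) ≃ Option (Fin n)) (X : Matrix (Fin n) (Fin n) ℚ_[p]) :
    Matrix (Fin (n + 1)) (Fin (n + 1)) ℚ_[p] :=
  fun i j =>
    Option.casesOn (e i) (Option.casesOn (f j) (1 : ℚ_[p]) (fun _ => 0))
      (fun i' => Option.casesOn (f j) (0 : ℚ_[p]) (fun j' => X i' j'))

lemma lift_mul {n : ℕ} (e f g : Fin (n + 1) ≃ Option (Fin n))
    (X Y : Matrix (Fin n) (Fin n) ℚ_[p]) :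
    lift e f X * lift f g Y = lift e g (X * Y) := by
  ext i j
  rw [Matrix.mul_apply]
  rw [← Equiv.sum_comp f.symm (fun k => lift e f X i k * lift f g Y k j)]
  rw [Fintype.sum_option]
  rcases hi : e i with _ | i' <;> rcases hj : g j with _ | j' <;>
    simp only [lift, hi, hj, Equiv.apply_symm_apply, Matrix.mul_apply]
  · simp
  · simp
  · simp
  · simp


lemma lift_det_same {n : ℕ} (e : Fin (n + 1) ≃ Option (Fin n))
    (X : Matrix (Fin n) (Fin n) ℚ_[p]) : (lift e e X).det = X.det := by
  have : lift e e X =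
      (Matrix.fromBlocks X 0 0 (1 : Matrix PUnit.{1} PUnit.{1} ℚ_[p])).submatrix
        (e.trans (Equiv.optionEquivSumPUnit (Fin n))) (e.trans (Equiv.optionEquivSumPUnit (Fin n))) := by
    ext i j
    rcases hi : e i with _ | i' <;> rcases hj : e j with _ | j' <;>
      simp [lift, hi, hj, Matrix.submatrix_apply, Equiv.optionEquivSumPUnit,
        Matrix.fromBlocks, Matrix.one_apply]
  rw [this, Matrix.det_submatrix_equiv_self, Matrix.det_fromBlocks_zero₂₁, Matrix.det_one, mul_one]

lemma lift_one_eq {n : ℕ} (e f : Fin (n + 1) ≃ Option (Fin n)) :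
    lift e f (1 : Matrix (Fin n) (Fin n) ℚ_[p]) =
      (1 : Matrix (Option (Fin n)) (Option (Fin n)) ℚ_[p]).submatrix e f := by
  ext i j
  rcases hi : e i with _ | i' <;> rcases hj : f j with _ | j' <;>
    simp [lift, hi, hj, Matrix.submatrix_apply, Matrix.one_apply]

lemma lift_norm_det {n : ℕ} (e f : Fin (n + 1) ≃ Option (Fin n))
    (X : Matrix (Fin n) (Fin n) ℚ_[p]) : ‖(lift e f X).det‖ = ‖X.det‖ := by
  have h1 : lift e e X * lift e f 1 = lift e f X := by rw [lift_mul, mul_one]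
  have h2 : (lift e f (1 : Matrix (Fin n) (Fin n) ℚ_[p])).det =
      ((Equiv.Perm.sign (e.trans f.symm) : ℤ) : ℚ_[p]) := by
    rw [lift_one_eq]
    have : ((1 : Matrix (Option (Fin n)) (Option (Fin n)) ℚ_[p]).submatrix e f) =
        ((1 : Matrix (Option (Fin n)) (Option (Fin n)) ℚ_[p]).submatrix f f).submatrix
          (e.trans f.symm) (Equiv.refl _) := by
      ext i j
      simp [Matrix.submatrix_apply, Matrix.one_apply, Equiv.symm_apply_eq]
    rw [this]
    rw [show ((1 : Matrix (Option (Fin n)) (Option (Fin n)) ℚ_[p]).submatrix f f).submatrix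
          (e.trans f.symm) (Equiv.refl _) =
        ((1 : Matrix (Option (Fin n)) (Option (Fin n)) ℚ_[p]).submatrix f f).submatrix
          (e.trans f.symm : Equiv.Perm (Fin (n+1))) id from rfl]
    rw [Matrix.det_permute, Matrix.det_submatrix_equiv_self, Matrix.det_one, mul_one]
  have hsign : ‖((Equiv.Perm.sign (e.trans f.symm) : ℤ) : ℚ_[p])‖ = 1 := by
    rcases Int.units_eq_one_or (Equiv.Perm.sign (e.trans f.symm)) with h | h <;> simp [h]
  rw [← h1, Matrix.det_mul, norm_mul, lift_det_same, h2, hsign, mul_one]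

lemma lift_permMat {n : ℕ} (e f : Fin (n + 1) ≃ Option (Fin n)) (π : Equiv.Perm (Fin n)) :
    lift e f (permMat p n π) = permMat p (n + 1) (f.trans ((Equiv.optionCongr π).trans e.symm)) := by
  ext i j
  rcases hi : e i with _ | i' <;> rcases hj : f j with _ | j' <;>
    simp only [lift, hi, hj, permMat, Equiv.trans_apply, Equiv.optionCongr_apply, Option.map]
  · simp [Equiv.symm_apply_eq, hi]
  · simp [Equiv.symm_apply_eq, hi]
  · simp [Equiv.symm_apply_eq, hi]
  · simp only [Equiv.symm_apply_eq, hi]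
    simp


/-- extracting indices -/
lemma eq_of_apply_none {n : ℕ} (e : Fin (n + 1) ≃ Option (Fin n)) {i : Fin (n + 1)}
    (h : e i = none) : i = e.symm none := by rw [← h, Equiv.symm_apply_apply]
lemma eq_of_apply_some {n : ℕ} (e : Fin (n + 1) ≃ Option (Fin n)) {i : Fin (n + 1)} {i' : Fin n}
    (h : e i = some i') : i = e.symm (some i') := by rw [← h, Equiv.symm_apply_apply]

/-- Lifting along `finSuccEquiv' (Fin.last n)` preserves upper triangularity. -/
lemma lift_last_upper {n : ℕ} (X : Matrix (Fin n) (Fin n) ℚ_[p])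
    (hX : ∀ i j : Fin n, j < i → X i j = 0) :
    ∀ i j : Fin (n + 1), j < i →
      lift (finSuccEquiv' (Fin.last n)) (finSuccEquiv' (Fin.last n)) X i j = 0 := by
  intro i j hij
  rcases hi : finSuccEquiv' (Fin.last n) i with _ | i' <;>
    rcases hj : finSuccEquiv' (Fin.last n) j with _ | j' <;>
      simp only [lift, hi, hj]
  · exfalso; rw [eq_of_apply_none _ hi, eq_of_apply_none _ hj] at hij; exact lt_irrefl _ hij
  · apply hX
    have hi2 := eq_of_apply_some _ hi
    have hj2 := eq_of_apply_some _ hj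
    simp only [finSuccEquiv'_symm_some, Fin.succAbove_last] at hi2 hj2
    rw [hi2, hj2] at hij
    exact Fin.castSucc_lt_castSucc_iff.mp hij

lemma lift_last_diag {n : ℕ} (X : Matrix (Fin n) (Fin n) ℚ_[p])
    (hX : ∀ i : Fin n, X i i ≠ 0) :
    ∀ i : Fin (n + 1), lift (finSuccEquiv' (Fin.last n)) (finSuccEquiv' (Fin.last n)) X i i ≠ 0 := by
  intro i
  rcases hi : finSuccEquiv' (Fin.last n) i with _ | i' <;> simp only [lift, hi]
  · exact one_ne_zero
  · exact hX i'

/-- Lifting along the same `finSuccEquiv' s₀` on both sides preserves Iwahori membership. -/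
lemma lift_Iwahori {n : ℕ} (s₀ : Fin (n + 1)) {X : Matrix (Fin n) (Fin n) ℚ_[p]}
    (hX : X ∈ Iwahori p n) :
    lift (finSuccEquiv' s₀) (finSuccEquiv' s₀) X ∈ Iwahori p (n + 1) := by
  obtain ⟨h1, h2, h3⟩ := hX
  refine ⟨fun i j => ?_, ?_, fun i j hij => ?_⟩
  · rcases hi : finSuccEquiv' s₀ i with _ | i' <;> rcases hj : finSuccEquiv' s₀ j with _ | j' <;>
      simp only [lift, hi, hj] <;> try simp
    exact h1 i' j'
  · rw [lift_norm_det]; exact h2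
  · rcases hi : finSuccEquiv' s₀ i with _ | i' <;> rcases hj : finSuccEquiv' s₀ j with _ | j' <;>
      simp only [lift, hi, hj] <;> try simp
    · exfalso; rw [eq_of_apply_none _ hi, eq_of_apply_none _ hj] at hij; exact lt_irrefl _ hij
    · apply h3
      have hi2 := eq_of_apply_some _ hi
      have hj2 := eq_of_apply_some _ hj
      simp only [finSuccEquiv'_symm_some] at hi2 hj2
      rw [hi2, hj2] at hij
      exact Fin.succAbove_lt_succAbove_iff.mp hij

/-- diagonal entries of a product of upper triangular matrices multiply -/
lemma diag_mul_upper {n : ℕ} (X Y : Matrix (Fin n) (Fin n) ℚ_[p])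
    (hX : ∀ i j : Fin n, j < i → X i j = 0) (hY : ∀ i j : Fin n, j < i → Y i j = 0)
    (i : Fin n) : (X * Y) i i = X i i * Y i i := by
  rw [Matrix.mul_apply]
  apply Finset.sum_eq_single i
  · intro k _ hk
    rcases lt_or_gt_of_ne hk with h | h
    · rw [hX i k h, zero_mul]
    · rw [hY k i h, mul_zero]
  · intro h; exact absurd (Finset.mem_univ i) h
lemma upper_mul {n : ℕ} {X Y : Matrix (Fin n) (Fin n) ℚ_[p]}
    (hX : ∀ i j : Fin n, j < i → X i j = 0) (hY : ∀ i j : Fin n, j < i → Y i j = 0) :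
    ∀ i j : Fin n, j < i → (X * Y) i j = 0 := by
  have hX' : X.BlockTriangular id := fun i j h => hX i j h
  have hY' : Y.BlockTriangular id := fun i j h => hY i j h
  exact fun i j h => (hX'.mul hY') h

theorem iwasawa_decomp : ∀ (n : ℕ) (g : Matrix (Fin n) (Fin n) ℚ_[p]), g.det ≠ 0 →
    ∃ (b : Matrix (Fin n) (Fin n) ℚ_[p]) (π₁ : Equiv.Perm (Fin n))
      (j₁ : Matrix (Fin n) (Fin n) ℚ_[p]),
      (∀ i j : Fin n, j < i → b i j = 0) ∧ (∀ i, b i i ≠ 0) ∧ j₁ ∈ Iwahori p n ∧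
      g = b * permMat p n π₁ * j₁ := by
  intro n
  induction n with
  | zero =>
    intro g _
    refine ⟨1, 1, 1, fun i => i.elim0, fun i => i.elim0, ?_, ?_⟩
    · exact ⟨fun i => i.elim0, by rw [Matrix.det_one, norm_one], fun i => i.elim0⟩
    · ext i; exact i.elim0
  | succ n ih =>
    intro g hg
    have hrow : ∃ s, g (Fin.last n) s ≠ 0 := by
      by_contra hc
      push_neg at hc
      exact hg (Matrix.det_eq_zero_of_row_eq_zero (Fin.last n) hc)
    obtain ⟨sne, hsne⟩ := hrow
    set S : Finset (Fin (n + 1)) :=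
      Finset.univ.filter (fun s => ∀ t, ‖g (Fin.last n) t‖ ≤ ‖g (Fin.last n) s‖) with hS
    have hSne : S.Nonempty := by
      obtain ⟨x, _, hx⟩ := Finset.exists_max_image Finset.univ (fun s => ‖g (Fin.last n) s‖)
        ⟨sne, Finset.mem_univ _⟩
      exact ⟨x, Finset.mem_filter.mpr ⟨Finset.mem_univ _, fun t => hx t (Finset.mem_univ _)⟩⟩
    set s₀ := S.max' hSne with hs₀def
    have hmax : ∀ t, ‖g (Fin.last n) t‖ ≤ ‖g (Fin.last n) s₀‖ :=
      (Finset.mem_filter.mp (S.max'_mem hSne)).2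
    have ha : g (Fin.last n) s₀ ≠ 0 := by
      intro h0
      apply hsne
      have h1 := hmax sne
      rw [h0, norm_zero] at h1
      exact norm_le_zero_iff.mp h1
    have hstrict : ∀ s, s₀ < s → ‖g (Fin.last n) s‖ < ‖g (Fin.last n) s₀‖ := by
      intro s hs
      rcases lt_or_eq_of_le (hmax s) with h | h
      · exact h
      · exact absurd (S.le_max' s (Finset.mem_filter.mpr
          ⟨Finset.mem_univ _, fun t => (hmax t).trans (le_of_eq h.symm)⟩)) (not_le.mpr hs)
    set a := g (Fin.last n) s₀ with hadef
    set g₁ : Matrix (Fin (n + 1)) (Fin (n + 1)) ℚ_[p] :=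
      Matrix.of (fun i s => if i = Fin.last n then g i s / a else g i s) with hg₁
    have hg₁last : ∀ s, g₁ (Fin.last n) s = g (Fin.last n) s / a := by
      intro s; simp [hg₁]
    have hg₁other : ∀ i s, i ≠ Fin.last n → g₁ i s = g i s := by
      intro i s hi; simp [hg₁, hi]
    have hfac0 : g = Matrix.diagonal (fun i => if i = Fin.last n then a else 1) * g₁ := by
      ext i s
      rw [Matrix.diagonal_mul]
      by_cases h : i = Fin.last n
      · subst h
        rw [hg₁last, if_pos rfl, mul_comm, div_mul_cancel₀ _ ha]
      · rw [hg₁other i s h, if_neg h, one_mul]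
    have hg₁row_le : ∀ s, ‖g₁ (Fin.last n) s‖ ≤ 1 := by
      intro s
      rw [hg₁last, norm_div]
      exact (div_le_one (norm_pos_iff.mpr ha)).mpr (hmax s)
    have hg₁row_lt : ∀ s, s₀ < s → ‖g₁ (Fin.last n) s‖ < 1 := by
      intro s hs
      rw [hg₁last, norm_div]
      exact (div_lt_one (norm_pos_iff.mpr ha)).mpr (hstrict s hs)
    have hg₁pivot : g₁ (Fin.last n) s₀ = 1 := by
      rw [hg₁last]
      exact div_self ha
    set v : Fin (n + 1) → ℚ_[p] := fun s => if s = s₀ then 0 else g₁ (Fin.last n) s with hv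
    have hvnorm : ∀ s, ‖v s‖ ≤ 1 := by
      intro s
      simp only [hv]
      by_cases hs : s = s₀
      · rw [if_pos hs]; simp
      · rw [if_neg hs]; exact hg₁row_le s
    set w : Matrix (Fin (n + 1)) (Fin (n + 1)) ℚ_[p] :=
      Matrix.of (fun k s => if k = s₀ then v s else 0) with hw
    set j₀ : Matrix (Fin (n + 1)) (Fin (n + 1)) ℚ_[p] := 1 + w with hj₀
    set g₂ : Matrix (Fin (n + 1)) (Fin (n + 1)) ℚ_[p] :=
      Matrix.of (fun i s => if s = s₀ then g₁ i s₀ else g₁ i s - g₁ (Fin.last n) s * g₁ i s₀)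
      with hg₂
    have hg₂col : ∀ i, g₂ i s₀ = g₁ i s₀ := by intro i; simp [hg₂]
    have hg₂other : ∀ i s, s ≠ s₀ → g₂ i s = g₁ i s - g₁ (Fin.last n) s * g₁ i s₀ := by
      intro i s hs; simp [hg₂, hs]
    have hfac1 : g₁ = g₂ * j₀ := by
      ext i s
      rw [hj₀, Matrix.mul_add, Matrix.mul_one, Matrix.add_apply, Matrix.mul_apply]
      have hterm : ∀ k, g₂ i k * w k s = if k = s₀ then g₂ i s₀ * v s else 0 := by
        intro k
        by_cases hk : k = s₀ <;> simp [hw, hk]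
      rw [Finset.sum_congr rfl (fun k _ => hterm k), Finset.sum_ite_eq' Finset.univ s₀ _,
        if_pos (Finset.mem_univ _)]
      by_cases hs : s = s₀
      · subst hs
        simp only [hv, if_pos rfl, mul_zero, add_zero, hg₂col]
      · rw [hg₂other i s hs, hg₂col, hv]
        simp only [if_neg hs]
        ring
    have hj₀ent : ∀ k s, j₀ k s = (if k = s then 1 else 0) + (if k = s₀ then v s else 0) := by
      intro k s
      rw [hj₀, Matrix.add_apply, Matrix.one_apply]
      simp [hw]
    have hj₀Iw : j₀ ∈ Iwahori p (n + 1) := by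
      have hdiag : ∀ s, j₀ s s = 1 := by
        intro s
        rw [hj₀ent, if_pos rfl]
        by_cases hs : s = s₀
        · subst hs; simp [hv]
        · rw [if_neg hs, add_zero]
      have hent : ∀ k s, ‖j₀ k s‖ ≤ 1 := by
        intro k s
        by_cases hks : k = s
        · subst hks; rw [hdiag]; simp
        · rw [hj₀ent, if_neg hks, zero_add]
          by_cases hk : k = s₀
          · rw [if_pos hk]; exact hvnorm s
          · rw [if_neg hk]; simp
      have hupper : ∀ k s : Fin (n + 1), k < s → ‖j₀ k s‖ < 1 := by
        intro k s hks
        rw [hj₀ent, if_neg (ne_of_lt hks), zero_add]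
        by_cases hk : k = s₀
        · rw [if_pos hk]
          have hss : s₀ < s := hk ▸ hks
          simp only [hv, if_neg (ne_of_gt hss)]
          exact hg₁row_lt s hss
        · rw [if_neg hk]; simp
      exact ⟨hent, norm_det_eq_one _ hent hdiag hupper, hupper⟩
    set g₃ : Matrix (Fin (n + 1)) (Fin (n + 1)) ℚ_[p] :=
      Matrix.of (fun i s =>
        if i = Fin.last n then g₂ i s else g₂ i s - g₂ i s₀ * g₂ (Fin.last n) s) with hg₃
    have hg₃last : ∀ s, g₃ (Fin.last n) s = g₂ (Fin.last n) s := by intro s; simp [hg₃]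
    have hg₃other : ∀ i s, i ≠ Fin.last n →
        g₃ i s = g₂ i s - g₂ i s₀ * g₂ (Fin.last n) s := by
      intro i s hi; simp [hg₃, hi]
    set w2 : Matrix (Fin (n + 1)) (Fin (n + 1)) ℚ_[p] :=
      Matrix.of (fun i k => if k = Fin.last n ∧ i ≠ Fin.last n then g₂ i s₀ else 0) with hw2
    set b₁ : Matrix (Fin (n + 1)) (Fin (n + 1)) ℚ_[p] := 1 + w2 with hb₁
    have hfac2 : g₂ = b₁ * g₃ := by
      ext i s
      rw [hb₁, Matrix.add_mul, Matrix.one_mul, Matrix.add_apply, Matrix.mul_apply]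
      have hterm : ∀ k, w2 i k * g₃ k s =
          if k = Fin.last n then
            (if i = Fin.last n then 0 else g₂ i s₀ * g₃ (Fin.last n) s) else 0 := by
        intro k
        by_cases hk : k = Fin.last n <;> by_cases hi : i = Fin.last n <;>
          simp [hw2, hk, hi]
      rw [Finset.sum_congr rfl (fun k _ => hterm k),
        Finset.sum_ite_eq' Finset.univ (Fin.last n) _, if_pos (Finset.mem_univ _)]
      by_cases hi : i = Fin.last n
      · rw [if_pos hi, add_zero]
        subst hi
        rw [hg₃last]
      · rw [if_neg hi, hg₃other i s hi, hg₃last]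
        ring
    have hg₂pivot : g₂ (Fin.last n) s₀ = 1 := by rw [hg₂col, hg₁pivot]
    have hg₂row : ∀ s, s ≠ s₀ → g₂ (Fin.last n) s = 0 := by
      intro s hs
      rw [hg₂other _ s hs, hg₁pivot, mul_one, sub_self]
    have hMrow : ∀ s, g₃ (Fin.last n) s = if s = s₀ then 1 else 0 := by
      intro s
      rw [hg₃last]
      by_cases hs : s = s₀
      · subst hs; rw [if_pos rfl, hg₂pivot]
      · rw [if_neg hs, hg₂row s hs]
    have hMcol : ∀ i, i ≠ Fin.last n → g₃ i s₀ = 0 := by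
      intro i hi
      rw [hg₃other i s₀ hi, hg₂pivot, mul_one, sub_self]
    set M' : Matrix (Fin n) (Fin n) ℚ_[p] :=
      Matrix.of (fun i j => g₃ ((Fin.last n).succAbove i) (s₀.succAbove j)) with hM'
    have hMlift : g₃ = lift (finSuccEquiv' (Fin.last n)) (finSuccEquiv' s₀) M' := by
      ext i j
      rcases hi : finSuccEquiv' (Fin.last n) i with _ | i' <;>
        rcases hj : finSuccEquiv' s₀ j with _ | j' <;> simp only [lift, hi, hj]
      · have h1 := eq_of_apply_none _ hi
        have h2 := eq_of_apply_none _ hj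
        simp only [finSuccEquiv'_symm_none] at h1 h2
        rw [h1, h2, hMrow, if_pos rfl]
      · have h1 := eq_of_apply_none _ hi
        have h2 := eq_of_apply_some _ hj
        simp only [finSuccEquiv'_symm_none, finSuccEquiv'_symm_some] at h1 h2
        rw [h1, h2, hMrow, if_neg (Fin.succAbove_ne s₀ j')]
      · have h1 := eq_of_apply_some _ hi
        have h2 := eq_of_apply_none _ hj
        simp only [finSuccEquiv'_symm_none, finSuccEquiv'_symm_some] at h1 h2
        rw [h1, h2]
        exact hMcol _ (Fin.succAbove_ne (Fin.last n) i')
      · have h1 := eq_of_apply_some _ hi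
        have h2 := eq_of_apply_some _ hj
        simp only [finSuccEquiv'_symm_some] at h1 h2
        rw [h1, h2]
        simp [hM']
    have hdetM : g₃.det ≠ 0 := by
      intro h0
      apply hg
      rw [hfac0, hfac1, hfac2]
      simp [Matrix.det_mul, h0]
    have hdetM' : M'.det ≠ 0 := by
      intro h0
      apply hdetM
      rw [hMlift]
      have hnd := lift_norm_det (p := p) (finSuccEquiv' (Fin.last n)) (finSuccEquiv' s₀) M'
      rw [h0, norm_zero] at hnd
      exact norm_eq_zero.mp hnd
    obtain ⟨b', π', j', hb'u, hb'd, hj'Iw, hfac'⟩ := ih M' hdetM'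
    set π₁ : Equiv.Perm (Fin (n + 1)) :=
      (finSuccEquiv' s₀).trans ((Equiv.optionCongr π').trans (finSuccEquiv' (Fin.last n)).symm)
      with hπ₁
    have hMfac : g₃ = lift (finSuccEquiv' (Fin.last n)) (finSuccEquiv' (Fin.last n)) b' *
        (permMat p (n + 1) π₁ * lift (finSuccEquiv' s₀) (finSuccEquiv' s₀) j') := by
      calc g₃ = lift (finSuccEquiv' (Fin.last n)) (finSuccEquiv' s₀) M' := hMlift
        _ = lift (finSuccEquiv' (Fin.last n)) (finSuccEquiv' s₀)
            (b' * (permMat p n π' * j')) := by rw [hfac', Matrix.mul_assoc]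
        _ = lift (finSuccEquiv' (Fin.last n)) (finSuccEquiv' (Fin.last n)) b' *
            lift (finSuccEquiv' (Fin.last n)) (finSuccEquiv' s₀) (permMat p n π' * j') :=
              (lift_mul _ _ _ _ _).symm
        _ = lift (finSuccEquiv' (Fin.last n)) (finSuccEquiv' (Fin.last n)) b' *
            (lift (finSuccEquiv' (Fin.last n)) (finSuccEquiv' s₀) (permMat p n π') *
              lift (finSuccEquiv' s₀) (finSuccEquiv' s₀) j') := by
              rw [lift_mul _ _ _ (permMat p n π') j']
        _ = _ := by rw [lift_permMat]
    have hb₁upper : ∀ i j : Fin (n + 1), j < i → b₁ i j = 0 := by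
      intro i j hij
      have hne : i ≠ j := ne_of_gt hij
      have hjℓ : j ≠ Fin.last n := by
        intro h
        exact absurd (lt_of_lt_of_le hij (Fin.le_last i)) (by rw [h]; exact lt_irrefl _)
      rw [hb₁, Matrix.add_apply, Matrix.one_apply, if_neg hne]
      simp [hw2, hjℓ]
    have hb₁diag : ∀ i : Fin (n + 1), b₁ i i = 1 := by
      intro i
      rw [hb₁, Matrix.add_apply, Matrix.one_apply, if_pos rfl]
      simp [hw2]
    have hb₀upper : ∀ i j : Fin (n + 1), j < i →
        Matrix.diagonal (fun i : Fin (n+1) => if i = Fin.last n then a else 1) i j = 0 := by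
      intro i j hij
      exact Matrix.diagonal_apply_ne _ (ne_of_gt hij)
    have hliftb'u := lift_last_upper b' hb'u
    refine ⟨Matrix.diagonal (fun i : Fin (n+1) => if i = Fin.last n then a else 1) *
      (b₁ * lift (finSuccEquiv' (Fin.last n)) (finSuccEquiv' (Fin.last n)) b'), π₁,
      lift (finSuccEquiv' s₀) (finSuccEquiv' s₀) j' * j₀, ?_, ?_, ?_, ?_⟩
    · exact upper_mul hb₀upper (upper_mul hb₁upper hliftb'u)
    · intro i
      rw [diag_mul_upper _ _ hb₀upper (upper_mul hb₁upper hliftb'u),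
        diag_mul_upper _ _ hb₁upper hliftb'u, hb₁diag, one_mul]
      apply mul_ne_zero
      · rw [Matrix.diagonal_apply_eq]
        by_cases hi : i = Fin.last n <;> simp [hi, ha]
      · exact lift_last_diag b' hb'd i
    · exact Iwahori_mul_mem (lift_Iwahori s₀ hj'Iw) hj₀Iw
    · rw [hfac0, hfac1, hfac2, hMfac]
      simp only [Matrix.mul_assoc]
end IwahoriAux

/-- Explicit Iwahori decomposition (existence part) for `GL_n(ℚ_p)`: for every lower
unitriangular `u` and every permutation matrix `w′`, one can write
`u·w′ = p₁·h₁·π₁·j₁` with `p₁` upper unitriangular, `h₁` invertible diagonal, `π₁` a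
permutation matrix, and `j₁` in the Iwahori subgroup. -/
theorem explicit_iwahori_decomposition_exists
    (p : ℕ) [Fact p.Prime] (n : ℕ) (hn : 1 ≤ n)
    (u : Matrix (Fin n) (Fin n) ℚ_[p])
    (hu : (∀ i, u i i = 1) ∧ ∀ i j : Fin n, i < j → u i j = 0)
    (π' : Equiv.Perm (Fin n)) :
    ∃ (p₁ : Matrix (Fin n) (Fin n) ℚ_[p]) (d : Fin n → ℚ_[p])
      (π₁ : Equiv.Perm (Fin n)) (j₁ : Matrix (Fin n) (Fin n) ℚ_[p]),
      ((∀ i, p₁ i i = 1) ∧ ∀ i j : Fin n, j < i → p₁ i j = 0) ∧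
      (∀ i, d i ≠ 0) ∧
      j₁ ∈ Iwahori p n ∧
      u * permMat p n π' = p₁ * Matrix.diagonal d * permMat p n π₁ * j₁ := by
  obtain ⟨hu1, hu2⟩ := hu
  have hdetu : u.det = 1 := by
    have hbt : u.BlockTriangular OrderDual.toDual := fun i j h => hu2 i j h
    rw [Matrix.det_of_lowerTriangular u hbt]
    exact Finset.prod_eq_one (fun i _ => hu1 i)
  have hpm : permMat p n π' = (1 : Matrix (Fin n) (Fin n) ℚ_[p]).submatrix id ⇑π' := by
    ext i j
    simp [permMat, Matrix.one_apply, eq_comm]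
  have hdetperm : (permMat p n π').det ≠ 0 := by
    rw [hpm, Matrix.det_permute', Matrix.det_one, mul_one]
    rcases Int.units_eq_one_or (Equiv.Perm.sign π') with h | h <;> simp [h]
  have hdet : (u * permMat p n π').det ≠ 0 := by
    rw [Matrix.det_mul, hdetu, one_mul]
    exact hdetperm
  obtain ⟨b, π₁, j₁, hbu, hbd, hjIw, hfac⟩ := iwasawa_decomp n (u * permMat p n π') hdet
  refine ⟨Matrix.of (fun i j => b i j * (b j j)⁻¹), fun i => b i i, π₁, j₁,
    ⟨fun i => ?_, fun i j hij => ?_⟩, hbd, hjIw, ?_⟩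
  · exact mul_inv_cancel₀ (hbd i)
  · rw [Matrix.of_apply, hbu i j hij, zero_mul]
  · have hb : Matrix.of (fun i j => b i j * (b j j)⁻¹) *
        Matrix.diagonal (fun i => b i i) = b := by
      ext i j
      rw [Matrix.mul_diagonal, Matrix.of_apply, inv_mul_cancel_right₀ (hbd j)]
    rw [hb]
    exact hfac
end

section
/- Let p be a prime and n ≥ 1, let B be the group of invertible upper triangular matrices in GL_n(ℚ_p), and let J be the Iwahori subgroup. If π and π′ are permutation matrices such that the double cosets B·π·J and B·π′·J intersect — i.e., b·π·j = b′·π′·j′ for some b, b′ ∈ B and j, j′ ∈ J — then π = π′. Consequently, the double cosets B·π·J for distinct permutation matrices π are pairwise disjoint in GL_n(ℚ_p). -/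
/-- The group `B` of invertible upper triangular matrices in `GL_n(ℚ_p)`. -/
def UpperBorel (p : ℕ) [Fact p.Prime] (n : ℕ) : Set (Matrix (Fin n) (Fin n) ℚ_[p]) :=
  {b | (∀ i j : Fin n, j < i → b i j = 0) ∧ IsUnit b.det}


/-!
If `b π j = b' π' j'`, then `u := b'⁻¹ b` is upper triangular and `(π'⁻¹ u π) j = j'`. The
matrix `π'⁻¹ u π = j' j⁻¹` has entries `u (π' a) (π k)`; it is integral, and its reduction
mod `p` is the product of the lower triangular invertible matrices `j̄'` and `j̄⁻¹`. Hence its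
diagonal entries `u (π' a) (π a)` are nonzero, which for upper triangular `u` forces
`π' a ≤ π a`. By symmetry `π = π'`.
-/

open Matrix

theorem Matrix.IsLowerTriangular.isUnit_diag {R α : Type*} [CommRing R] [LinearOrder α]
    [Fintype α] {A : Matrix α α R} (hA : A.IsLowerTriangular) (hdet : IsUnit A.det) (i : α) :
    IsUnit (A i i) := by
  rw [det_of_isLowerTriangular A hA, IsUnit.prod_univ_iff] at hdet
  exact hdet i

theorem Matrix.isUnit_diag_of_mul_eq_of_isLowerTriangular {R α : Type*} [CommRing R]
    [LinearOrder α] [Fintype α] {A B C : Matrix α α R} (hB : B.IsLowerTriangular)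
    (hC : C.IsLowerTriangular) (hBdet : IsUnit B.det) (hCdet : IsUnit C.det) (h : A * B = C)
    (i : α) : IsUnit (A i i) := by
  have : Invertible B := B.invertibleOfIsUnitDet hBdet
  have hA : A = C * B⁻¹ := by rw [← h, mul_inv_cancel_right_of_invertible]
  refine IsLowerTriangular.isUnit_diag ?_ ?_ i
  · rw [hA]
    exact hC.mul (blockTriangular_inv_of_blockTriangular hB)
  · rw [← h, det_mul] at hCdet
    exact isUnit_of_mul_isUnit_left hCdet

theorem RingHom.isUnit_det_map {R S n : Type*} [CommRing R] [CommRing S] [Fintype n]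
    [DecidableEq n] (f : R →+* S) {A : Matrix n n R} (hA : IsUnit A.det) :
    IsUnit (A.map f).det := by
  rw [← RingHom.mapMatrix_apply, ← RingHom.map_det]
  exact hA.map f

section

variable {p : ℕ} [Fact p.Prime] {n : ℕ}

theorem PadicInt.toZMod_eq_zero_of_norm_lt_one {x : ℤ_[p]} (h : ‖x‖ < 1) : toZMod x = 0 := by
  rw [← RingHom.mem_ker, ker_toZMod]
  exact mem_nonunits.mpr h

theorem exists_padicInt_lift_of_mem_Iwahori {g : Matrix (Fin n) (Fin n) ℚ_[p]}
    (hg : g ∈ Iwahori p n) :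
    ∃ G : Matrix (Fin n) (Fin n) ℤ_[p], G.map PadicInt.Coe.ringHom = g ∧ IsUnit G.det ∧
      (G.map PadicInt.toZMod).IsLowerTriangular := by
  obtain ⟨hint, hdet, hupper⟩ := hg
  set G : Matrix (Fin n) (Fin n) ℤ_[p] := fun i j => ⟨g i j, hint i j⟩
  have hG : G.map PadicInt.Coe.ringHom = g := rfl
  refine ⟨G, hG, ?_, fun i j hij => PadicInt.toZMod_eq_zero_of_norm_lt_one (hupper i j hij)⟩
  rw [← hG, ← RingHom.mapMatrix_apply, ← RingHom.map_det] at hdet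
  exact PadicInt.isUnit_iff.mpr hdet

theorem diag_ne_zero_of_mul_mem_Iwahori {M j j' : Matrix (Fin n) (Fin n) ℚ_[p]}
    (hj : j ∈ Iwahori p n) (hj' : j' ∈ Iwahori p n) (h : M * j = j') (i : Fin n) :
    M i i ≠ 0 := by
  obtain ⟨J, rfl, hJdet, hJtri⟩ := exists_padicInt_lift_of_mem_Iwahori hj
  obtain ⟨J', rfl, hJ'det, hJ'tri⟩ := exists_padicInt_lift_of_mem_Iwahori hj'
  set N := J' * J⁻¹
  have hNJ : N * J = J' := nonsing_inv_mul_cancel_right J J' hJdet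
  have : Invertible (J.map PadicInt.Coe.ringHom) :=
    invertibleOfIsUnitDet _ (PadicInt.Coe.ringHom.isUnit_det_map hJdet)
  have hM : M = N.map PadicInt.Coe.ringHom :=
    mul_left_injective_of_invertible (J.map PadicInt.Coe.ringHom)
      (show M * _ = _ * _ by rw [h, ← Matrix.map_mul, hNJ])
  have hNred : IsUnit (PadicInt.toZMod (N i i)) :=
    isUnit_diag_of_mul_eq_of_isLowerTriangular hJtri hJ'tri
      (PadicInt.toZMod.isUnit_det_map hJdet) (PadicInt.toZMod.isUnit_det_map hJ'det)
      (by rw [← Matrix.map_mul, hNJ]) i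
  have hN : N i i ≠ 0 := fun hzero => not_isUnit_zero (by rwa [hzero, map_zero] at hNred)
  rw [hM, map_apply]
  exact fun h0 => hN (PadicInt.coe_eq_zero.mp h0)

theorem permMat_eq_toMatrix_toPEquiv (π : Equiv.Perm (Fin n)) :
    permMat p n π = π.symm.toPEquiv.toMatrix := by
  ext i j
  simp [permMat, PEquiv.toMatrix_apply, Equiv.eq_symm_apply, eq_comm]

theorem submatrix_mul_eq_of_mul_permMat_mul_eq {π π' : Equiv.Perm (Fin n)}
    {u j j' : Matrix (Fin n) (Fin n) ℚ_[p]}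
    (h : u * permMat p n π * j = permMat p n π' * j') : u.submatrix π' π * j = j' := by
  rw [permMat_eq_toMatrix_toPEquiv, permMat_eq_toMatrix_toPEquiv, PEquiv.mul_toMatrix_toPEquiv,
    PEquiv.toMatrix_toPEquiv_mul, Equiv.symm_symm] at h
  have := congrArg (π'.toPEquiv.toMatrix * ·) h
  rw [← Matrix.mul_assoc, PEquiv.toMatrix_toPEquiv_mul, PEquiv.toMatrix_toPEquiv_mul] at this
  simpa using this

theorem apply_le_apply_of_mul_permMat_mul_eq {π π' : Equiv.Perm (Fin n)}
    {b b' j j' : Matrix (Fin n) (Fin n) ℚ_[p]} (hb : b ∈ UpperBorel p n)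
    (hb' : b' ∈ UpperBorel p n) (hj : j ∈ Iwahori p n) (hj' : j' ∈ Iwahori p n)
    (h : b * permMat p n π * j = b' * permMat p n π' * j') (i : Fin n) : π' i ≤ π i := by
  have : Invertible b' := b'.invertibleOfIsUnitDet hb'.2
  have hu : (b'⁻¹ * b).IsUpperTriangular :=
    (blockTriangular_inv_of_blockTriangular fun _ _ h => hb'.1 _ _ h).mul fun _ _ h => hb.1 _ _ h
  have hM : (b'⁻¹ * b).submatrix π' π * j = j' := by
    refine submatrix_mul_eq_of_mul_permMat_mul_eq ?_
    rw [mul_assoc b'⁻¹, mul_assoc b'⁻¹, h, mul_assoc b', inv_mul_cancel_left_of_invertible]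
  exact not_lt.mp fun hlt => diag_ne_zero_of_mul_mem_Iwahori hj hj' hM i (hu hlt)

end

theorem iwahori_double_cosets_pairwise_disjoint_general
    (p : ℕ) [Fact p.Prime] (n : ℕ)
    (π π' : Equiv.Perm (Fin n)) :
    (∀ b b' j j' : Matrix (Fin n) (Fin n) ℚ_[p],
      b ∈ UpperBorel p n → b' ∈ UpperBorel p n →
      j ∈ Iwahori p n → j' ∈ Iwahori p n →
      b * permMat p n π * j = b' * permMat p n π' * j' → π = π') ∧
    (π ≠ π' →
      {g : Matrix (Fin n) (Fin n) ℚ_[p] |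
          ∃ b ∈ UpperBorel p n, ∃ j ∈ Iwahori p n, g = b * permMat p n π * j} ∩
        {g : Matrix (Fin n) (Fin n) ℚ_[p] |
          ∃ b ∈ UpperBorel p n, ∃ j ∈ Iwahori p n, g = b * permMat p n π' * j}
      = ∅) := by
  have hcoset : ∀ b b' j j' : Matrix (Fin n) (Fin n) ℚ_[p],
      b ∈ UpperBorel p n → b' ∈ UpperBorel p n →
      j ∈ Iwahori p n → j' ∈ Iwahori p n →
      b * permMat p n π * j = b' * permMat p n π' * j' → π = π' :=
    fun b b' j j' hb hb' hj hj' h => Equiv.ext fun i =>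
      le_antisymm (apply_le_apply_of_mul_permMat_mul_eq hb' hb hj' hj h.symm i)
        (apply_le_apply_of_mul_permMat_mul_eq hb hb' hj hj' h i)
  refine ⟨hcoset, fun hne => Set.eq_empty_iff_forall_notMem.mpr ?_⟩
  rintro g ⟨⟨b, hb, j, hj, rfl⟩, ⟨b', hb', j', hj', h⟩⟩
  exact hne (hcoset b b' j j' hb hb' hj hj' h)

/-- If the double cosets `B·π·J` and `B·π′·J` intersect, i.e. `b·π·j = b′·π′·j′` for
some `b, b′ ∈ B` and `j, j′ ∈ J`, then `π = π′`; consequently the double cosets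
`B·π·J` for distinct permutation matrices are pairwise disjoint in `GL_n(ℚ_p)`. -/
theorem iwahori_double_cosets_pairwise_disjoint
    (p : ℕ) [Fact p.Prime] (n : ℕ) (hn : 1 ≤ n)
    (π π' : Equiv.Perm (Fin n)) :
    (∀ b b' j j' : Matrix (Fin n) (Fin n) ℚ_[p],
      b ∈ UpperBorel p n → b' ∈ UpperBorel p n →
      j ∈ Iwahori p n → j' ∈ Iwahori p n →
      b * permMat p n π * j = b' * permMat p n π' * j' → π = π') ∧
    (π ≠ π' →
      {g : Matrix (Fin n) (Fin n) ℚ_[p] |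
          ∃ b ∈ UpperBorel p n, ∃ j ∈ Iwahori p n, g = b * permMat p n π * j} ∩
        {g : Matrix (Fin n) (Fin n) ℚ_[p] |
          ∃ b ∈ UpperBorel p n, ∃ j ∈ Iwahori p n, g = b * permMat p n π' * j}
      = ∅) :=
  iwahori_double_cosets_pairwise_disjoint_general p n π π'
end
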